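/- arXiv:2008.04962 — 2 statements merged into one kernel-verified Lean document; each statement's English description precedes it below -/
import Mathlib

section
/- Let E ⊂ ℝ be a finite set. There exist universal constants C and D and a map Ē : C²₊(E) → C²₊(ℝ) such that: (i) Ē(f)|_E = f for all f ∈ C²₊(E); (ii) ‖Ē(f)‖_{C²(ℝ)} ≤ C‖f‖_{C²₊(E)}; (iii) for each t ∈ ℝ there exists S(t) ⊂ E with #S(t) ≤ D such that for all f, g ∈ C²₊(E) with f = g on S(t), the m-th derivatives satisfy (d^m/dt^m)(Ē(f))(t) = (d^m/dt^m)(Ē(g))(t) for m = 0, 1, 2. -/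
open Set Real

noncomputable section

/-- `(Σ_{m ≤ 2} |F^{(m)}(t)|²)^{1/2}`. -/
noncomputable def C2sum1 (F : ℝ → ℝ) (t : ℝ) : ℝ :=
  Real.sqrt (∑ m ∈ Finset.range 3, (iteratedDeriv m F t) ^ 2)

/-- `‖F‖_{C²(ℝ)} ≤ M`. -/
def C2NormLE1 (F : ℝ → ℝ) (M : ℝ) : Prop := ∀ t, C2sum1 F t ≤ M

/-- `f ∈ C²₊(E)` for `E ⊂ ℝ`: `f` agrees on `E` with a nonnegative `C²` function of
finite norm. -/
def MemC2plus1 (E : Set ℝ) (f : ℝ → ℝ) : Prop :=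
  ∃ F : ℝ → ℝ, ContDiff ℝ 2 F ∧ (∀ t, 0 ≤ F t) ∧ (∀ t ∈ E, F t = f t) ∧ ∃ M, C2NormLE1 F M

/-- The trace norm `‖f‖_{C²₊(E)}` for `E ⊂ ℝ`. -/
noncomputable def traceNorm1plus (E : Set ℝ) (f : ℝ → ℝ) : ℝ :=
  sInf { M | ∃ F : ℝ → ℝ, ContDiff ℝ 2 F ∧ (∀ t, 0 ≤ F t) ∧ (∀ t ∈ E, F t = f t) ∧
    C2NormLE1 F M }


-- ===================== auxiliary development =====================

open Filter

local notation "σ" => Real.smoothTransition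


lemma deriv_flat_right {g : ℝ → ℝ} (hg : Differentiable ℝ g) {a : ℝ}
    (h : ∀ s, a ≤ s → g s = g a) {x : ℝ} (hx : a ≤ x) : deriv g x = 0 := by
  rcases eq_or_lt_of_le hx with heq | hlt
  · subst heq
    have h1 : HasDerivWithinAt g (deriv g a) (Ici a) a :=
      (hg a).hasDerivAt.hasDerivWithinAt
    have h2 : HasDerivWithinAt g 0 (Ici a) a := by
      have hc : HasDerivWithinAt (fun _ : ℝ => g a) 0 (Ici a) a :=
        (hasDerivAt_const a (g a)).hasDerivWithinAt
      exact hc.congr (fun y hy => h y hy) (h a le_rfl)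
    have e1 := h1.derivWithin (uniqueDiffOn_Ici a a Set.self_mem_Ici)
    have e2 := h2.derivWithin (uniqueDiffOn_Ici a a Set.self_mem_Ici)
    rw [e1] at e2; exact e2
  · have hev : g =ᶠ[nhds x] (fun _ => g a) := by
      filter_upwards [Ioi_mem_nhds hlt] with y hy
      exact h y (le_of_lt hy)
    rw [hev.deriv_eq, deriv_const]

lemma deriv_flat_left {g : ℝ → ℝ} (hg : Differentiable ℝ g) {a : ℝ}
    (h : ∀ s, s ≤ a → g s = g a) {x : ℝ} (hx : x ≤ a) : deriv g x = 0 := by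
  rcases eq_or_lt_of_le hx with heq | hlt
  · subst heq
    have h1 : HasDerivWithinAt g (deriv g x) (Iic x) x :=
      (hg x).hasDerivAt.hasDerivWithinAt
    have h2 : HasDerivWithinAt g 0 (Iic x) x := by
      have hc : HasDerivWithinAt (fun _ : ℝ => g x) 0 (Iic x) x :=
        (hasDerivAt_const x (g x)).hasDerivWithinAt
      exact hc.congr (fun y hy => h y hy) (h x le_rfl)
    have e1 := h1.derivWithin (uniqueDiffOn_Iic x x Set.self_mem_Iic)
    have e2 := h2.derivWithin (uniqueDiffOn_Iic x x Set.self_mem_Iic)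
    rw [e1] at e2; exact e2
  · have hev : g =ᶠ[nhds x] (fun _ => g a) := by
      filter_upwards [Iio_mem_nhds hlt] with y hy
      exact h y (le_of_lt hy)
    rw [hev.deriv_eq, deriv_const]



lemma sigma_diff : Differentiable ℝ σ :=
  (Real.smoothTransition.contDiff (n := (⊤:ℕ∞))).differentiable (by simp)

lemma dsigma_contDiff : ContDiff ℝ (⊤ : ℕ∞) (deriv σ) := by
  have h := contDiff_infty_iff_deriv.1 (Real.smoothTransition.contDiff (n := (⊤:ℕ∞)))
  exact_mod_cast h.2




lemma dsigma_diff : Differentiable ℝ (deriv σ) :=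
  dsigma_contDiff.differentiable (by simp)

lemma dsigma_cont : Continuous (deriv σ) := dsigma_diff.continuous

lemma d2sigma_cont : Continuous (deriv (deriv σ)) := by
  have h := contDiff_infty_iff_deriv.1 dsigma_contDiff
  exact (h.2.differentiable (by simp)).continuous

-- flatness of deriv σ and deriv (deriv σ)
lemma dsigma_flat {x : ℝ} (hx : x ≤ 0 ∨ 1 ≤ x) : deriv σ x = 0 := by
  rcases hx with hx | hx
  · exact deriv_flat_left sigma_diff
      (fun s hs => by rw [Real.smoothTransition.zero_of_nonpos hs,
        Real.smoothTransition.zero_of_nonpos le_rfl]) hx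
  · exact deriv_flat_right sigma_diff
      (fun s hs => by rw [Real.smoothTransition.one_of_one_le hs,
        Real.smoothTransition.one_of_one_le le_rfl]) hx

lemma d2sigma_flat {x : ℝ} (hx : x ≤ 0 ∨ 1 ≤ x) : deriv (deriv σ) x = 0 := by
  rcases hx with hx | hx
  · exact deriv_flat_left dsigma_diff
      (fun s hs => by rw [dsigma_flat (Or.inl hs), dsigma_flat (Or.inl le_rfl)]) hx
  · exact deriv_flat_right dsigma_diff
      (fun s hs => by rw [dsigma_flat (Or.inr hs), dsigma_flat (Or.inr le_rfl)]) hx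

-- global bound
lemma sigma_bound : ∃ B : ℝ, 0 ≤ B ∧ (∀ x, |deriv σ x| ≤ B) ∧ (∀ x, |deriv (deriv σ) x| ≤ B) := by
  obtain ⟨B1, hB1⟩ := (isCompact_Icc (a := (0:ℝ)) (b := 1)).exists_bound_of_continuousOn
    dsigma_cont.continuousOn
  obtain ⟨B2, hB2⟩ := (isCompact_Icc (a := (0:ℝ)) (b := 1)).exists_bound_of_continuousOn
    d2sigma_cont.continuousOn
  refine ⟨max (max B1 B2) 0, le_max_right _ _, fun x => ?_, fun x => ?_⟩
  · by_cases hx : x ∈ Icc (0:ℝ) 1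
    · exact le_trans (hB1 x hx) (le_trans (le_max_left _ _) (le_max_left _ _))
    · have : x ≤ 0 ∨ 1 ≤ x := by
        rcases lt_or_ge x 0 with h | h
        · exact Or.inl h.le
        · exact Or.inr (by by_contra hc; exact hx ⟨h, le_of_not_ge hc⟩)
      rw [dsigma_flat this]; simpa using le_max_right (max B1 B2) 0
  · by_cases hx : x ∈ Icc (0:ℝ) 1
    · exact le_trans (hB2 x hx) (le_trans (le_max_right _ _) (le_max_left _ _))
    · have : x ≤ 0 ∨ 1 ≤ x := by
        rcases lt_or_ge x 0 with h | h
        · exact Or.inl h.le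
        · exact Or.inr (by by_contra hc; exact hx ⟨h, le_of_not_ge hc⟩)
      rw [d2sigma_flat this]; simpa using le_max_right (max B1 B2) 0
lemma C2sum1_nonneg (F : ℝ → ℝ) (t : ℝ) : 0 ≤ C2sum1 F t := Real.sqrt_nonneg _

lemma C2NormLE1.mono {F : ℝ → ℝ} {M M' : ℝ} (h : C2NormLE1 F M) (hMM : M ≤ M') :
    C2NormLE1 F M' := fun t => (h t).trans hMM

lemma abs_iteratedDeriv_le {F : ℝ → ℝ} {M : ℝ} (h : C2NormLE1 F M) {m : ℕ} (hm : m < 3)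
    (t : ℝ) : |iteratedDeriv m F t| ≤ M := by
  have h1 : (iteratedDeriv m F t) ^ 2 ≤ ∑ k ∈ Finset.range 3, (iteratedDeriv k F t) ^ 2 :=
    Finset.single_le_sum (f := fun k => (iteratedDeriv k F t) ^ 2)
      (fun k _ => sq_nonneg _) (Finset.mem_range.2 hm)
  calc |iteratedDeriv m F t| = Real.sqrt ((iteratedDeriv m F t) ^ 2) := (Real.sqrt_sq_eq_abs _).symm
    _ ≤ C2sum1 F t := Real.sqrt_le_sqrt h1
    _ ≤ M := h t

lemma iteratedDeriv_zero_fun : ∀ m : ℕ, iteratedDeriv m (fun _ : ℝ => (0:ℝ)) = fun _ => 0 := by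
  intro m
  induction m with
  | zero => exact iteratedDeriv_zero
  | succ n ih =>
    rw [iteratedDeriv_succ, ih]
    ext x; exact deriv_const x 0

lemma C2NormLE1_zero : C2NormLE1 (fun _ => (0:ℝ)) 0 := by
  intro t
  unfold C2sum1
  have : ∀ m ∈ Finset.range 3, (iteratedDeriv m (fun _ : ℝ => (0:ℝ)) t) ^ 2 = 0 := by
    intro m _; rw [iteratedDeriv_zero_fun m]; simp
  rw [Finset.sum_congr rfl this]
  simp

lemma tn_set_nonneg {A : Set ℝ} {g : ℝ → ℝ} {M : ℝ}
    (hM : M ∈ { M | ∃ F : ℝ → ℝ, ContDiff ℝ 2 F ∧ (∀ t, 0 ≤ F t) ∧ (∀ t ∈ A, F t = g t) ∧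
      C2NormLE1 F M }) : 0 ≤ M := by
  obtain ⟨F, _, _, _, hF⟩ := hM
  exact le_trans (C2sum1_nonneg F 0) (hF 0)

lemma tn_nonneg (A : Set ℝ) (g : ℝ → ℝ) : 0 ≤ traceNorm1plus A g :=
  Real.sInf_nonneg fun _ hM => tn_set_nonneg hM

lemma tn_bddBelow (A : Set ℝ) (g : ℝ → ℝ) :
    BddBelow { M | ∃ F : ℝ → ℝ, ContDiff ℝ 2 F ∧ (∀ t, 0 ≤ F t) ∧ (∀ t ∈ A, F t = g t) ∧
      C2NormLE1 F M } := ⟨0, fun _ hM => tn_set_nonneg hM⟩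

/-- Existence of a canonical near-optimal nonnegative extension. -/
lemma exists_good (A : Set ℝ) (g : ℝ → ℝ) (hg : MemC2plus1 A g) :
    ∃ G : ℝ → ℝ, ContDiff ℝ 2 G ∧ (∀ t, 0 ≤ G t) ∧ (∀ t ∈ A, G t = g t) ∧
      C2NormLE1 G (2 * traceNorm1plus A g) := by
  classical
  set S := { M | ∃ F : ℝ → ℝ, ContDiff ℝ 2 F ∧ (∀ t, 0 ≤ F t) ∧ (∀ t ∈ A, F t = g t) ∧
    C2NormLE1 F M } with hS
  obtain ⟨F, hF1, hF2, hF3, M, hFM⟩ := hg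
  have hne : S.Nonempty := ⟨M, F, hF1, hF2, hF3, hFM⟩
  have hbdd := tn_bddBelow A g
  have htn : traceNorm1plus A g = sInf S := rfl
  rcases eq_or_lt_of_le (tn_nonneg A g) with h0 | hpos
  · -- infimum is zero: g vanishes on A
    have hgz : ∀ a ∈ A, g a = 0 := by
      intro a ha
      by_contra hga
      have hpos2 : 0 < |g a| := abs_pos.2 hga
      have : sInf S < |g a| := by rw [← htn, ← h0]; exact hpos2
      obtain ⟨M', hM'S, hM'⟩ := (csInf_lt_iff hbdd hne).1 this
      obtain ⟨F', h1, h2, h3, h4⟩ := hM'S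
      have : |g a| ≤ M' := by
        rw [← h3 a ha]
        have := abs_iteratedDeriv_le h4 (m := 0) (by norm_num) a
        simpa [iteratedDeriv_zero] using this
      linarith
    refine ⟨fun _ => 0, contDiff_const, fun t => le_rfl, fun t ht => (hgz t ht).symm, ?_⟩
    have : 2 * traceNorm1plus A g = 0 := by rw [← h0]; ring
    rw [this]
    exact C2NormLE1_zero
  · have : sInf S < 2 * traceNorm1plus A g := by
      rw [← htn]; linarith
    obtain ⟨M', hM'S, hM'⟩ := (csInf_lt_iff hbdd hne).1 this
    obtain ⟨F', h1, h2, h3, h4⟩ := hM'S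
    exact ⟨F', h1, h2, h3, h4.mono hM'.le⟩

open Classical in
/-- Canonical choice of near-optimal nonnegative extension of data `g` on `A`. -/
noncomputable def pickP (A : Set ℝ) (g : ℝ → ℝ) : ℝ → ℝ :=
  if h : ∃ G : ℝ → ℝ, ContDiff ℝ 2 G ∧ (∀ t, 0 ≤ G t) ∧ (∀ t ∈ A, G t = g t) ∧
      C2NormLE1 G (2 * traceNorm1plus A g) then h.choose else fun _ => 0

lemma pickP_spec {A : Set ℝ} {g : ℝ → ℝ} (hg : MemC2plus1 A g) :
    ContDiff ℝ 2 (pickP A g) ∧ (∀ t, 0 ≤ pickP A g t) ∧ (∀ t ∈ A, pickP A g t = g t) ∧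
      C2NormLE1 (pickP A g) (2 * traceNorm1plus A g) := by
  have h := exists_good A g hg
  rw [pickP, dif_pos h]
  exact h.choose_spec

/-- Monotonicity of the trace norm under restriction of the set. -/
lemma tn_mono {A E : Set ℝ} {g f : ℝ → ℝ} (hAE : A ⊆ E) (hgf : ∀ a ∈ A, g a = f a)
    (hf : MemC2plus1 E f) : traceNorm1plus A g ≤ traceNorm1plus E f := by
  obtain ⟨F, hF1, hF2, hF3, M, hFM⟩ := hf
  have hne : { M | ∃ F : ℝ → ℝ, ContDiff ℝ 2 F ∧ (∀ t, 0 ≤ F t) ∧ (∀ t ∈ E, F t = f t) ∧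
      C2NormLE1 F M }.Nonempty := ⟨M, F, hF1, hF2, hF3, hFM⟩
  apply csInf_le_csInf (tn_bddBelow A g) hne
  rintro M' ⟨F', h1, h2, h3, h4⟩
  exact ⟨F', h1, h2, fun a ha => by rw [h3 a (hAE ha), hgf a ha], h4⟩


lemma lip_global {g : ℝ → ℝ} (hg : Differentiable ℝ g) {L : ℝ}
    (hL : ∀ x, |deriv g x| ≤ L) (a b : ℝ) : |g b - g a| ≤ L * |b - a| := by
  rcases le_total a b with hab | hab
  · have h := norm_image_sub_le_of_norm_deriv_le_segment'
      (f := g) (f' := fun x => deriv g x) (a := a) (b := b)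
      (fun x _ => (hg x).hasDerivAt.hasDerivWithinAt)
      (fun x _ => by rw [Real.norm_eq_abs]; exact hL x) b (right_mem_Icc.2 hab)
    rw [Real.norm_eq_abs] at h
    calc |g b - g a| ≤ L * (b - a) := h
      _ ≤ L * |b - a| := by
          have : (0:ℝ) ≤ L := le_trans (abs_nonneg _) (hL a)
          nlinarith [le_abs_self (b - a)]
  · have h := norm_image_sub_le_of_norm_deriv_le_segment'
      (f := g) (f' := fun x => deriv g x) (a := b) (b := a)
      (fun x _ => (hg x).hasDerivAt.hasDerivWithinAt)
      (fun x _ => by rw [Real.norm_eq_abs]; exact hL x) a (right_mem_Icc.2 hab)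
    rw [Real.norm_eq_abs] at h
    rw [abs_sub_comm]
    calc |g a - g b| ≤ L * (a - b) := h
      _ ≤ L * |b - a| := by
          have : (0:ℝ) ≤ L := le_trans (abs_nonneg _) (hL a)
          nlinarith [le_abs_self (a - b), abs_sub_comm a b]

/-- key estimates for the difference `H = G2 - G1` of two adjacent local pieces,
which agree at both endpoints of the gap. -/
lemma Hbounds {G1 G2 : ℝ → ℝ} (h1 : ContDiff ℝ 2 G1) (h2 : ContDiff ℝ 2 G2) {K : ℝ}
    (hK : 0 ≤ K)
    (hb1 : ∀ x, |G1 x| ≤ K) (hb1' : ∀ x, |deriv G1 x| ≤ K)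
    (hb1'' : ∀ x, |deriv (deriv G1) x| ≤ K)
    (hb2 : ∀ x, |G2 x| ≤ K) (hb2' : ∀ x, |deriv G2 x| ≤ K)
    (hb2'' : ∀ x, |deriv (deriv G2) x| ≤ K)
    {a b : ℝ} (hab : a < b) (ha : G1 a = G2 a) (hb : G1 b = G2 b)
    {t : ℝ} (hta : a ≤ t) (htb : t ≤ b) :
    |G2 t - G1 t| ≤ 2 * K * min ((b-a)^2) 1 ∧
    |deriv G2 t - deriv G1 t| ≤ 2 * K * min (b-a) 1 := by
  have hd1 : Differentiable ℝ G1 := h1.differentiable (by norm_num)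
  have hd2 : Differentiable ℝ G2 := h2.differentiable (by norm_num)
  have hd1' : Differentiable ℝ (deriv G1) := by
    have h' : ContDiff ℝ ((1 : WithTop ℕ∞) + 1) G1 := by
      have e : ((1 : WithTop ℕ∞) + 1) = 2 := by norm_num
      rw [e]; exact h1
    exact ((contDiff_succ_iff_deriv.1 h').2.2).differentiable one_ne_zero
  have hd2' : Differentiable ℝ (deriv G2) := by
    have h' : ContDiff ℝ ((1 : WithTop ℕ∞) + 1) G2 := by
      have e : ((1 : WithTop ℕ∞) + 1) = 2 := by norm_num
      rw [e]; exact h2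
    exact ((contDiff_succ_iff_deriv.1 h').2.2).differentiable one_ne_zero
  set H : ℝ → ℝ := fun x => G2 x - G1 x with hH
  set H' : ℝ → ℝ := fun x => deriv G2 x - deriv G1 x with hH'
  have hHd : ∀ x, HasDerivAt H (H' x) x := fun x =>
    ((hd2 x).hasDerivAt).sub ((hd1 x).hasDerivAt)
  have hderivH : deriv H = H' := funext fun x => (hHd x).deriv
  have hH'd : Differentiable ℝ H' := hd2'.sub hd1'
  have hH'bound : ∀ x, |deriv H' x| ≤ 2 * K := by
    intro x
    have : deriv H' x = deriv (deriv G2) x - deriv (deriv G1) x :=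
      deriv_sub (hd2' x) (hd1' x)
    rw [this]
    calc |deriv (deriv G2) x - deriv (deriv G1) x|
        ≤ |deriv (deriv G2) x| + |deriv (deriv G1) x| := abs_sub _ _
      _ ≤ 2 * K := by have := hb1'' x; have := hb2'' x; linarith
  -- Rolle
  obtain ⟨ξ, hξ, hdξ⟩ := exists_deriv_eq_zero (f := H) hab
    ((hd2.continuous.sub hd1.continuous).continuousOn)
    (show G2 a - G1 a = G2 b - G1 b by rw [← ha, ← hb]; ring)
  rw [hderivH] at hdξ
  have hH't : ∀ x, a ≤ x → x ≤ b → |H' x| ≤ 2 * K * (b - a) := by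
    intro x hax hxb
    have := lip_global hH'd hH'bound ξ x
    rw [hdξ, sub_zero] at this
    calc |H' x| ≤ 2 * K * |x - ξ| := this
      _ ≤ 2 * K * (b - a) := by
          have h1' : |x - ξ| ≤ b - a := by
            rw [abs_le]; constructor <;> [linarith [hξ.1, hξ.2]; linarith [hξ.1, hξ.2]]
          nlinarith [h1', hK, abs_nonneg (x - ξ)]
  have hH'direct : ∀ x, |H' x| ≤ 2 * K := by
    intro x
    calc |H' x| ≤ |deriv G2 x| + |deriv G1 x| := abs_sub _ _
      _ ≤ 2 * K := by have := hb1' x; have := hb2' x; linarith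
  constructor
  · -- zeroth order bound
    have hHa : H a = 0 := by simp only [hH]; rw [ha]; ring
    rcases le_total (b - a) 1 with hcase | hcase
    · have hmin : min ((b-a)^2) 1 = (b-a)^2 := min_eq_left (by nlinarith)
      rw [hmin]
      have h := norm_image_sub_le_of_norm_deriv_le_segment'
        (f := H) (f' := H') (a := a) (b := b)
        (fun x _ => (hHd x).hasDerivWithinAt)
        (fun x hx => by rw [Real.norm_eq_abs]; exact hH't x hx.1 hx.2.le)
        t ⟨hta, htb⟩
      rw [Real.norm_eq_abs, hHa, sub_zero] at h
      have e1 : t - a ≤ b - a := by linarith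
      have e2 : (0:ℝ) ≤ 2 * K * (b - a) :=
        mul_nonneg (mul_nonneg (by norm_num) hK) (by linarith)
      calc |H t| ≤ 2 * K * (b - a) * (t - a) := h
        _ ≤ 2 * K * (b - a) * (b - a) := mul_le_mul_of_nonneg_left e1 e2
        _ = 2 * K * (b - a)^2 := by ring
    · have hmin : min ((b-a)^2) 1 = 1 := min_eq_right (by nlinarith)
      rw [hmin]
      calc |H t| ≤ |G2 t| + |G1 t| := abs_sub _ _
        _ ≤ 2 * K * 1 := by have := hb1 t; have := hb2 t; linarith
  · rcases le_total (b - a) 1 with hcase | hcase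
    · have hmin : min (b-a) 1 = b - a := min_eq_left hcase
      rw [hmin]; exact hH't t hta htb
    · have hmin : min (b-a) 1 = 1 := min_eq_right hcase
      rw [hmin]; simpa using hH'direct t

/-- pure arithmetic: bounds for the blended values -/
lemma blend_bound {B K h : ℝ} (hB : 0 ≤ B) (hK : 0 ≤ K) (hh : 0 < h)
    {v dv d2v G1 G2 dG1 dG2 d2G1 d2G2 : ℝ}
    (hv0 : 0 ≤ v) (hv1 : v ≤ 1) (hdv : |dv| ≤ B / h) (hd2v : |d2v| ≤ B / h^2)
    (hG1 : |G1| ≤ K) (hG2 : |G2| ≤ K) (hdG1 : |dG1| ≤ K) (hdG2 : |dG2| ≤ K)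
    (hd2G1 : |d2G1| ≤ K) (hd2G2 : |d2G2| ≤ K)
    (hH0 : |G2 - G1| ≤ 2*K*min (h^2) 1) (hH1 : |dG2 - dG1| ≤ 2*K*min h 1) :
    |G1 + v*(G2 - G1)| ≤ 3*K ∧
    |dv*(G2-G1) + (dG1 + v*(dG2 - dG1))| ≤ (3 + 2*B)*K ∧
    |d2v*(G2-G1) + 2*dv*(dG2-dG1) + (d2G1 + v*(d2G2-d2G1))| ≤ (3+6*B)*K := by
  have hmin1 : min (h^2) 1 ≤ h := by
    rcases le_total h 1 with hc | hc
    · calc min (h^2) 1 ≤ h^2 := min_le_left _ _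
        _ ≤ h := by nlinarith
    · calc min (h^2) 1 ≤ 1 := min_le_right _ _
        _ ≤ h := hc
  have hmin2 : min (h^2) 1 ≤ h^2 := min_le_left _ _
  have hmin3 : min h 1 ≤ h := min_le_left _ _
  have hminnn : 0 ≤ min (h^2) 1 := le_min (by positivity) zero_le_one
  have hminn3 : 0 ≤ min h 1 := le_min hh.le zero_le_one
  -- |dv * (G2 - G1)| ≤ 2 B K
  have key1 : |dv * (G2 - G1)| ≤ 2 * B * K := by
    rw [abs_mul]
    calc |dv| * |G2 - G1| ≤ (B / h) * (2*K*min (h^2) 1) := by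
          apply mul_le_mul hdv hH0 (abs_nonneg _) (by positivity)
      _ ≤ (B / h) * (2*K*h) := by
          apply mul_le_mul_of_nonneg_left _ (by positivity)
          nlinarith
      _ = 2 * B * K := by field_simp
  have key2 : |d2v * (G2 - G1)| ≤ 2 * B * K := by
    rw [abs_mul]
    calc |d2v| * |G2 - G1| ≤ (B / h^2) * (2*K*min (h^2) 1) := by
          apply mul_le_mul hd2v hH0 (abs_nonneg _) (by positivity)
      _ ≤ (B / h^2) * (2*K*h^2) := by
          apply mul_le_mul_of_nonneg_left _ (by positivity)
          nlinarith
      _ = 2 * B * K := by field_simp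
  have key3 : |dv * (dG2 - dG1)| ≤ 2 * B * K := by
    rw [abs_mul]
    calc |dv| * |dG2 - dG1| ≤ (B / h) * (2*K*min h 1) := by
          apply mul_le_mul hdv hH1 (abs_nonneg _) (by positivity)
      _ ≤ (B / h) * (2*K*h) := by
          apply mul_le_mul_of_nonneg_left _ (by positivity)
          nlinarith
      _ = 2 * B * K := by field_simp
  have conv0 : |G1 + v*(G2 - G1)| ≤ 3*K := by
    have : |v*(G2-G1)| ≤ 2*K := by
      rw [abs_mul]
      have hva : |v| ≤ 1 := abs_le.2 ⟨by linarith, hv1⟩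
      calc |v| * |G2 - G1| ≤ 1 * (|G2| + |G1|) :=
            mul_le_mul hva (abs_sub _ _) (abs_nonneg _) zero_le_one
        _ ≤ 2*K := by linarith
    calc |G1 + v*(G2-G1)| ≤ |G1| + |v*(G2-G1)| := abs_add_le _ _
      _ ≤ 3*K := by linarith
  have conv1 : |dG1 + v*(dG2 - dG1)| ≤ K := by
    have h1 : dG1 + v*(dG2 - dG1) = (1-v)*dG1 + v*dG2 := by ring
    rw [h1]
    calc |(1-v)*dG1 + v*dG2| ≤ |(1-v)*dG1| + |v*dG2| := abs_add_le _ _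
      _ = (1-v)*|dG1| + v*|dG2| := by
          rw [abs_mul, abs_mul, abs_of_nonneg (by linarith : (0:ℝ) ≤ 1 - v),
            abs_of_nonneg hv0]
      _ ≤ (1-v)*K + v*K := by
          apply add_le_add
          · exact mul_le_mul_of_nonneg_left hdG1 (by linarith)
          · exact mul_le_mul_of_nonneg_left hdG2 hv0
      _ = K := by ring
  have conv2 : |d2G1 + v*(d2G2 - d2G1)| ≤ K := by
    have h1 : d2G1 + v*(d2G2 - d2G1) = (1-v)*d2G1 + v*d2G2 := by ring
    rw [h1]
    calc |(1-v)*d2G1 + v*d2G2| ≤ |(1-v)*d2G1| + |v*d2G2| := abs_add_le _ _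
      _ = (1-v)*|d2G1| + v*|d2G2| := by
          rw [abs_mul, abs_mul, abs_of_nonneg (by linarith : (0:ℝ) ≤ 1 - v),
            abs_of_nonneg hv0]
      _ ≤ (1-v)*K + v*K := by
          apply add_le_add
          · exact mul_le_mul_of_nonneg_left hd2G1 (by linarith)
          · exact mul_le_mul_of_nonneg_left hd2G2 hv0
      _ = K := by ring
  refine ⟨conv0, ?_, ?_⟩
  · calc |dv*(G2-G1) + (dG1 + v*(dG2 - dG1))|
        ≤ |dv*(G2-G1)| + |dG1 + v*(dG2 - dG1)| := abs_add_le _ _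
      _ ≤ (3 + 2*B)*K := by linarith
  · calc |d2v*(G2-G1) + 2*dv*(dG2-dG1) + (d2G1 + v*(d2G2-d2G1))|
        ≤ |d2v*(G2-G1)| + |2*dv*(dG2-dG1)| + |d2G1 + v*(d2G2-d2G1)| := by
          calc _ ≤ |d2v*(G2-G1) + 2*dv*(dG2-dG1)| + |d2G1 + v*(d2G2-d2G1)| := abs_add_le _ _
            _ ≤ _ := by
              have := abs_add_le (d2v*(G2-G1)) (2*dv*(dG2-dG1))
              linarith
      _ ≤ (3+6*B)*K := by
          have h4 : |2*dv*(dG2-dG1)| = 2*|dv*(dG2-dG1)| := by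
            rw [mul_assoc, abs_mul]; simp
          rw [h4]; linarith


def NNk (τ : ℕ → ℝ) (n k : ℕ) : Set ℝ := {τ (k-1), τ k, τ (min (k+1) (n-1))}

noncomputable def Gb (τ : ℕ → ℝ) (n : ℕ) (f : ℝ → ℝ) (k : ℕ) : ℝ → ℝ :=
  pickP (NNk τ n k) ((NNk τ n k).indicator f)

open Classical in
noncomputable def uu (τ : ℕ → ℝ) (n k : ℕ) (t : ℝ) : ℝ :=
  if k = 0 then 1 else if k < n then σ ((t - τ (k-1)) / (τ k - τ (k-1))) else 0

open Classical in
noncomputable def du (τ : ℕ → ℝ) (n k : ℕ) (t : ℝ) : ℝ :=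
  if k = 0 then 0 else if k < n then
    deriv σ ((t - τ (k-1)) / (τ k - τ (k-1))) / (τ k - τ (k-1)) else 0

open Classical in
noncomputable def d2u (τ : ℕ → ℝ) (n k : ℕ) (t : ℝ) : ℝ :=
  if k = 0 then 0 else if k < n then
    deriv (deriv σ) ((t - τ (k-1)) / (τ k - τ (k-1))) / (τ k - τ (k-1)) ^ 2 else 0

noncomputable def psik (τ : ℕ → ℝ) (n k : ℕ) (t : ℝ) : ℝ :=
  uu τ n k t * (1 - uu τ n (k+1) t)

noncomputable def dpsik (τ : ℕ → ℝ) (n k : ℕ) (t : ℝ) : ℝ :=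
  du τ n k t * (1 - uu τ n (k+1) t) - uu τ n k t * du τ n (k+1) t

noncomputable def d2psik (τ : ℕ → ℝ) (n k : ℕ) (t : ℝ) : ℝ :=
  d2u τ n k t * (1 - uu τ n (k+1) t) - 2 * du τ n k t * du τ n (k+1) t
    - uu τ n k t * d2u τ n (k+1) t

noncomputable def ExtF (τ : ℕ → ℝ) (n : ℕ) (f : ℝ → ℝ) : ℝ → ℝ :=
  fun t => ∑ k ∈ Finset.range n, psik τ n k t * Gb τ n f k t

noncomputable def DF (τ : ℕ → ℝ) (n : ℕ) (f : ℝ → ℝ) (t : ℝ) : ℝ :=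
  ∑ k ∈ Finset.range n, (dpsik τ n k t * Gb τ n f k t + psik τ n k t * deriv (Gb τ n f k) t)

noncomputable def D2F (τ : ℕ → ℝ) (n : ℕ) (f : ℝ → ℝ) (t : ℝ) : ℝ :=
  ∑ k ∈ Finset.range n, (d2psik τ n k t * Gb τ n f k t
    + 2 * (dpsik τ n k t * deriv (Gb τ n f k) t) + psik τ n k t * deriv (deriv (Gb τ n f k)) t)

section UU
variable {τ : ℕ → ℝ} {n : ℕ}

/-- strict monotonicity hypothesis -/
def TauMono (τ : ℕ → ℝ) (n : ℕ) : Prop := ∀ i j, i < j → j < n → τ i < τ j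

lemma TauMono.le (hτ : TauMono τ n) {i j : ℕ} (hij : i ≤ j) (hj : j < n) : τ i ≤ τ j := by
  rcases eq_or_lt_of_le hij with rfl | h
  · exact le_rfl
  · exact (hτ i j h hj).le

lemma gap_pos (hτ : TauMono τ n) {k : ℕ} (hk1 : 1 ≤ k) (hkn : k < n) :
    0 < τ k - τ (k-1) := by
  have := hτ (k-1) k (by omega) hkn
  linarith


lemma uu_of {k : ℕ} (hk0 : k ≠ 0) (hkn : k < n) :
    uu τ n k = fun t => σ ((t - τ (k-1)) / (τ k - τ (k-1))) := by
  funext t; simp [uu, hk0, hkn]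

lemma du_of {k : ℕ} (hk0 : k ≠ 0) (hkn : k < n) :
    du τ n k = fun t => deriv σ ((t - τ (k-1)) / (τ k - τ (k-1))) / (τ k - τ (k-1)) := by
  funext t; simp [du, hk0, hkn]

lemma d2u_of {k : ℕ} (hk0 : k ≠ 0) (hkn : k < n) :
    d2u τ n k = fun t => deriv (deriv σ) ((t - τ (k-1)) / (τ k - τ (k-1))) / (τ k - τ (k-1)) ^ 2 := by
  funext t; simp [d2u, hk0, hkn]

lemma uu_of_zero : uu τ n 0 = fun _ => 1 := by funext t; simp [uu]
lemma du_of_zero : du τ n 0 = fun _ => 0 := by funext t; simp [du]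
lemma d2u_of_zero : d2u τ n 0 = fun _ => 0 := by funext t; simp [d2u]

lemma uu_of_top {k : ℕ} (hk0 : k ≠ 0) (hkn : ¬ k < n) : uu τ n k = fun _ => 0 := by
  funext t; simp [uu, hk0, hkn]
lemma du_of_top {k : ℕ} (hk0 : k ≠ 0) (hkn : ¬ k < n) : du τ n k = fun _ => 0 := by
  funext t; simp [du, hk0, hkn]
lemma d2u_of_top {k : ℕ} (hk0 : k ≠ 0) (hkn : ¬ k < n) : d2u τ n k = fun _ => 0 := by
  funext t; simp [d2u, hk0, hkn]

lemma hasDerivAt_uu (hτ : TauMono τ n) (k : ℕ) (t : ℝ) :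
    HasDerivAt (uu τ n k) (du τ n k t) t := by
  rcases eq_or_ne k 0 with rfl | hk0
  · rw [uu_of_zero, du_of_zero]; exact hasDerivAt_const t 1
  · by_cases hkn : k < n
    · rw [uu_of hk0 hkn, du_of hk0 hkn]
      have hinner : HasDerivAt (fun t : ℝ => (t - τ (k-1)) / (τ k - τ (k-1)))
          (1 / (τ k - τ (k-1))) t := by
        simpa using ((hasDerivAt_id t).sub_const (τ (k-1))).div_const (τ k - τ (k-1))
      have houter : HasDerivAt σ (deriv σ ((t - τ (k-1)) / (τ k - τ (k-1))))
          ((t - τ (k-1)) / (τ k - τ (k-1))) := (sigma_diff _).hasDerivAt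
      have h2 := houter.comp t hinner
      have heq : deriv σ ((t - τ (k-1)) / (τ k - τ (k-1))) * (1 / (τ k - τ (k-1)))
          = deriv σ ((t - τ (k-1)) / (τ k - τ (k-1))) / (τ k - τ (k-1)) := by ring
      rw [heq] at h2
      exact h2
    · rw [uu_of_top hk0 hkn, du_of_top hk0 hkn]; exact hasDerivAt_const t 0

lemma hasDerivAt_du (hτ : TauMono τ n) (k : ℕ) (t : ℝ) :
    HasDerivAt (du τ n k) (d2u τ n k t) t := by
  rcases eq_or_ne k 0 with rfl | hk0
  · rw [du_of_zero, d2u_of_zero]; exact hasDerivAt_const t 0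
  · by_cases hkn : k < n
    · rw [du_of hk0 hkn, d2u_of hk0 hkn]
      have hinner : HasDerivAt (fun t : ℝ => (t - τ (k-1)) / (τ k - τ (k-1)))
          (1 / (τ k - τ (k-1))) t := by
        simpa using ((hasDerivAt_id t).sub_const (τ (k-1))).div_const (τ k - τ (k-1))
      have houter : HasDerivAt (deriv σ) (deriv (deriv σ) ((t - τ (k-1)) / (τ k - τ (k-1))))
          ((t - τ (k-1)) / (τ k - τ (k-1))) := (dsigma_diff _).hasDerivAt
      have h2 := (houter.comp t hinner).div_const (τ k - τ (k-1))
      have heq : deriv (deriv σ) ((t - τ (k-1)) / (τ k - τ (k-1))) * (1 / (τ k - τ (k-1)))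
          / (τ k - τ (k-1)) = deriv (deriv σ) ((t - τ (k-1)) / (τ k - τ (k-1)))
          / (τ k - τ (k-1)) ^ 2 := by rw [mul_one_div, div_div, ← sq]
      rw [heq] at h2
      exact h2
    · rw [du_of_top hk0 hkn, d2u_of_top hk0 hkn]; exact hasDerivAt_const t 0

lemma uu_contDiff (hτ : TauMono τ n) (k : ℕ) : ContDiff ℝ 2 (uu τ n k) := by
  rcases eq_or_ne k 0 with rfl | hk0
  · rw [uu_of_zero]; exact contDiff_const
  · by_cases hkn : k < n
    · rw [uu_of hk0 hkn]
      have h1 : ContDiff ℝ 2 (fun t : ℝ => (t - τ (k-1)) / (τ k - τ (k-1))) :=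
        (contDiff_id.sub contDiff_const).div_const _
      exact (Real.smoothTransition.contDiff (n := 2)).comp h1
    · rw [uu_of_top hk0 hkn]; exact contDiff_const

lemma uu_mem (k : ℕ) (t : ℝ) : 0 ≤ uu τ n k t ∧ uu τ n k t ≤ 1 := by
  unfold uu
  split_ifs
  · norm_num
  · exact ⟨Real.smoothTransition.nonneg _, Real.smoothTransition.le_one _⟩
  · norm_num

lemma uu_eq_one (hτ : TauMono τ n) {k : ℕ} (hk1 : 1 ≤ k) (hkn : k < n) {t : ℝ}
    (ht : τ k ≤ t) : uu τ n k t = 1 ∧ du τ n k t = 0 ∧ d2u τ n k t = 0 := by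
  have hgap := gap_pos hτ hk1 hkn
  have hk0 : k ≠ 0 := by omega
  have harg : 1 ≤ (t - τ (k-1)) / (τ k - τ (k-1)) :=
    (le_div_iff₀ hgap).2 (by linarith)
  rw [uu_of hk0 hkn, du_of hk0 hkn, d2u_of hk0 hkn]
  refine ⟨Real.smoothTransition.one_of_one_le harg, ?_, ?_⟩
  · show deriv σ ((t - τ (k-1)) / (τ k - τ (k-1))) / (τ k - τ (k-1)) = 0
    rw [dsigma_flat (Or.inr harg)]; simp
  · show deriv (deriv σ) ((t - τ (k-1)) / (τ k - τ (k-1))) / (τ k - τ (k-1)) ^ 2 = 0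
    rw [d2sigma_flat (Or.inr harg)]; simp

lemma uu_eq_zero (hτ : TauMono τ n) {k : ℕ} (hk1 : 1 ≤ k) (hkn : k < n) {t : ℝ}
    (ht : t ≤ τ (k-1)) : uu τ n k t = 0 ∧ du τ n k t = 0 ∧ d2u τ n k t = 0 := by
  have hgap := gap_pos hτ hk1 hkn
  have hk0 : k ≠ 0 := by omega
  have harg : (t - τ (k-1)) / (τ k - τ (k-1)) ≤ 0 :=
    div_nonpos_of_nonpos_of_nonneg (by linarith) hgap.le
  rw [uu_of hk0 hkn, du_of hk0 hkn, d2u_of hk0 hkn]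
  refine ⟨Real.smoothTransition.zero_of_nonpos harg, ?_, ?_⟩
  · show deriv σ ((t - τ (k-1)) / (τ k - τ (k-1))) / (τ k - τ (k-1)) = 0
    rw [dsigma_flat (Or.inl harg)]; simp
  · show deriv (deriv σ) ((t - τ (k-1)) / (τ k - τ (k-1))) / (τ k - τ (k-1)) ^ 2 = 0
    rw [d2sigma_flat (Or.inl harg)]; simp

lemma uu_top {k : ℕ} (hk1 : 1 ≤ k) (hkn : ¬ k < n) (t : ℝ) :
    uu τ n k t = 0 ∧ du τ n k t = 0 ∧ d2u τ n k t = 0 := by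
  have hk0 : k ≠ 0 := by omega
  rw [uu_of_top hk0 hkn, du_of_top hk0 hkn, d2u_of_top hk0 hkn]
  exact ⟨rfl, rfl, rfl⟩

lemma uu_zero_k (t : ℝ) : uu τ n 0 t = 1 ∧ du τ n 0 t = 0 ∧ d2u τ n 0 t = 0 := by
  rw [uu_of_zero, du_of_zero, d2u_of_zero]
  exact ⟨rfl, rfl, rfl⟩

end UU

section P5
variable {τ : ℕ → ℝ} {n : ℕ} {f : ℝ → ℝ}

lemma contDiff2_deriv {G : ℝ → ℝ} (h : ContDiff ℝ 2 G) : ContDiff ℝ 1 (deriv G) := by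
  have h' : ContDiff ℝ ((1 : WithTop ℕ∞) + 1) G := by
    have : ((1 : WithTop ℕ∞) + 1) = 2 := by norm_num
    rw [this]; exact h
  exact (contDiff_succ_iff_deriv.1 h').2.2

lemma diff_of_contDiff2 {G : ℝ → ℝ} (h : ContDiff ℝ 2 G) : Differentiable ℝ G :=
  h.differentiable (by norm_num)

lemma diff_deriv_of_contDiff2 {G : ℝ → ℝ} (h : ContDiff ℝ 2 G) :
    Differentiable ℝ (deriv G) :=
  (contDiff2_deriv h).differentiable one_ne_zero

lemma hasDerivAt_psik (hτ : TauMono τ n) (k : ℕ) (t : ℝ) :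
    HasDerivAt (psik τ n k) (dpsik τ n k t) t := by
  have h1 := (hasDerivAt_uu hτ k t).mul
    ((hasDerivAt_const t (1:ℝ)).sub (hasDerivAt_uu hτ (k+1) t))
  have : du τ n k t * (1 - uu τ n (k+1) t) + uu τ n k t * (0 - du τ n (k+1) t)
      = dpsik τ n k t := by unfold dpsik; ring
  rw [← this]
  exact h1

lemma hasDerivAt_dpsik (hτ : TauMono τ n) (k : ℕ) (t : ℝ) :
    HasDerivAt (dpsik τ n k) (d2psik τ n k t) t := by
  have h1 := ((hasDerivAt_du hτ k t).mul
    ((hasDerivAt_const t (1:ℝ)).sub (hasDerivAt_uu hτ (k+1) t))).sub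
    ((hasDerivAt_uu hτ k t).mul (hasDerivAt_du hτ (k+1) t))
  have : d2u τ n k t * (1 - uu τ n (k+1) t) + du τ n k t * (0 - du τ n (k+1) t)
      - (du τ n k t * du τ n (k+1) t + uu τ n k t * d2u τ n (k+1) t)
      = d2psik τ n k t := by unfold d2psik; ring
  rw [← this]
  exact h1

lemma hasDerivAt_ExtF (hτ : TauMono τ n) (hG : ∀ k, k < n → ContDiff ℝ 2 (Gb τ n f k)) (t : ℝ) :
    HasDerivAt (ExtF τ n f) (DF τ n f t) t := by
  unfold ExtF DF
  apply HasDerivAt.fun_sum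
  intro k hk
  exact (hasDerivAt_psik hτ k t).mul
    ((diff_of_contDiff2 (hG k (Finset.mem_range.1 hk)) t).hasDerivAt)

lemma hasDerivAt_DF (hτ : TauMono τ n) (hG : ∀ k, k < n → ContDiff ℝ 2 (Gb τ n f k)) (t : ℝ) :
    HasDerivAt (DF τ n f) (D2F τ n f t) t := by
  unfold DF D2F
  apply HasDerivAt.fun_sum
  intro k hk
  have hGk := hG k (Finset.mem_range.1 hk)
  have h1 := ((hasDerivAt_dpsik hτ k t).mul ((diff_of_contDiff2 hGk t).hasDerivAt)).add
    ((hasDerivAt_psik hτ k t).mul ((diff_deriv_of_contDiff2 hGk t).hasDerivAt))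
  have : d2psik τ n k t * Gb τ n f k t + dpsik τ n k t * deriv (Gb τ n f k) t
      + (dpsik τ n k t * deriv (Gb τ n f k) t + psik τ n k t * deriv (deriv (Gb τ n f k)) t)
      = d2psik τ n k t * Gb τ n f k t + 2 * (dpsik τ n k t * deriv (Gb τ n f k) t)
        + psik τ n k t * deriv (deriv (Gb τ n f k)) t := by ring
  rw [this] at h1
  exact h1

lemma deriv_ExtF (hτ : TauMono τ n) (hG : ∀ k, k < n → ContDiff ℝ 2 (Gb τ n f k)) :
    deriv (ExtF τ n f) = DF τ n f := by
  funext t; exact (hasDerivAt_ExtF hτ hG t).deriv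

lemma iteratedDeriv_ExtF (hτ : TauMono τ n) (hG : ∀ k, k < n → ContDiff ℝ 2 (Gb τ n f k)) (t : ℝ) :
    iteratedDeriv 0 (ExtF τ n f) t = ExtF τ n f t ∧
    iteratedDeriv 1 (ExtF τ n f) t = DF τ n f t ∧
    iteratedDeriv 2 (ExtF τ n f) t = D2F τ n f t := by
  refine ⟨by rw [iteratedDeriv_zero], by rw [iteratedDeriv_one, deriv_ExtF hτ hG], ?_⟩
  have h2 : iteratedDeriv 2 (ExtF τ n f) = deriv (iteratedDeriv 1 (ExtF τ n f)) :=
    iteratedDeriv_succ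
  rw [h2, iteratedDeriv_one, deriv_ExtF hτ hG]
  exact (hasDerivAt_DF hτ hG t).deriv

lemma contDiff_ExtF (hτ : TauMono τ n) (hG : ∀ k, k < n → ContDiff ℝ 2 (Gb τ n f k)) :
    ContDiff ℝ 2 (ExtF τ n f) := by
  unfold ExtF
  apply ContDiff.sum
  intro k hk
  exact ((uu_contDiff hτ k).mul (contDiff_const.sub (uu_contDiff hτ (k+1)))).mul
    (hG k (Finset.mem_range.1 hk))

/-- vanishing of all ψ-data for indices below the active window -/
lemma psik_zero_low (hτ : TauMono τ n) {k j : ℕ} (hkj : k < j) (hjn : j < n) {t : ℝ}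
    (ht : τ j ≤ t) :
    psik τ n k t = 0 ∧ dpsik τ n k t = 0 ∧ d2psik τ n k t = 0 := by
  have hk1 : uu τ n (k+1) t = 1 ∧ du τ n (k+1) t = 0 ∧ d2u τ n (k+1) t = 0 := by
    apply uu_eq_one hτ (by omega) (by omega)
    exact le_trans (hτ.le (by omega : k + 1 ≤ j) hjn) ht
  have hk0 : du τ n k t = 0 ∧ d2u τ n k t = 0 := by
    rcases Nat.eq_zero_or_pos k with rfl | hk
    · exact ⟨(uu_zero_k t).2.1, (uu_zero_k t).2.2⟩
    · have := uu_eq_one hτ hk (by omega) (le_trans (hτ.le (by omega : k ≤ j) hjn) ht)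
      exact ⟨this.2.1, this.2.2⟩
  unfold psik dpsik d2psik
  rw [hk1.1, hk1.2.1, hk1.2.2, hk0.1, hk0.2]
  norm_num

/-- vanishing of all ψ-data for indices above the active window -/
lemma psik_zero_high (hτ : TauMono τ n) {k j : ℕ} (hkj : j < k) {t : ℝ}
    (ht : t ≤ τ j) :
    psik τ n k t = 0 ∧ dpsik τ n k t = 0 ∧ d2psik τ n k t = 0 := by
  have hk0 : uu τ n k t = 0 ∧ du τ n k t = 0 ∧ d2u τ n k t = 0 := by
    by_cases hkn : k < n
    · apply uu_eq_zero hτ (by omega) hkn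
      exact le_trans ht (hτ.le (by omega : j ≤ k - 1) (by omega))
    · exact uu_top (τ := τ) (by omega) hkn t
  have hk1 : du τ n (k+1) t = 0 ∧ d2u τ n (k+1) t = 0 := by
    by_cases hkn : k + 1 < n
    · have := uu_eq_zero hτ (by omega) hkn
        (le_trans ht (hτ.le (by omega : j ≤ (k+1) - 1) (by omega)))
      exact ⟨this.2.1, this.2.2⟩
    · have := uu_top (τ := τ) (by omega) hkn t
      exact ⟨this.2.1, this.2.2⟩
  unfold psik dpsik d2psik
  rw [hk0.1, hk0.2.1, hk0.2.2, hk1.1, hk1.2]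
  norm_num


lemma sum_collapse_pair {n j : ℕ} {h : ℕ → ℝ} (hjn : j + 1 < n)
    (hz : ∀ k, k < n → k ≠ j → k ≠ j + 1 → h k = 0) :
    ∑ k ∈ Finset.range n, h k = h j + h (j+1) := by
  have hsub : ({j, j+1} : Finset ℕ) ⊆ Finset.range n := by
    intro x hx
    simp only [Finset.mem_insert, Finset.mem_singleton] at hx
    rcases hx with rfl | rfl <;> exact Finset.mem_range.2 (by omega)
  rw [← Finset.sum_subset hsub]
  · exact Finset.sum_pair (by omega)
  · intro x hx hxp
    simp only [Finset.mem_insert, Finset.mem_singleton, not_or] at hxp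
    exact hz x (Finset.mem_range.1 hx) hxp.1 hxp.2

lemma sum_collapse_single {n j : ℕ} {h : ℕ → ℝ} (hjn : j < n)
    (hz : ∀ k, k < n → k ≠ j → h k = 0) :
    ∑ k ∈ Finset.range n, h k = h j :=
  Finset.sum_eq_single_of_mem j (Finset.mem_range.2 hjn)
    (fun k hk hkj => hz k (Finset.mem_range.1 hk) hkj)

/-- data at the two active indices on `[τ j, τ (j+1)]` -/
lemma psik_active (hτ : TauMono τ n) {j : ℕ} (hjn : j + 1 < n) {t : ℝ}
    (ht : τ j ≤ t) (ht' : t ≤ τ (j+1)) :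
    psik τ n j t = 1 - uu τ n (j+1) t ∧ dpsik τ n j t = -du τ n (j+1) t ∧
    d2psik τ n j t = -d2u τ n (j+1) t ∧
    psik τ n (j+1) t = uu τ n (j+1) t ∧ dpsik τ n (j+1) t = du τ n (j+1) t ∧
    d2psik τ n (j+1) t = d2u τ n (j+1) t := by
  have hj : uu τ n j t = 1 ∧ du τ n j t = 0 ∧ d2u τ n j t = 0 := by
    rcases Nat.eq_zero_or_pos j with rfl | hj0
    · exact uu_zero_k t
    · exact uu_eq_one hτ hj0 (by omega) ht
  have hj2 : uu τ n (j+2) t = 0 ∧ du τ n (j+2) t = 0 ∧ d2u τ n (j+2) t = 0 := by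
    by_cases h2n : j + 2 < n
    · exact uu_eq_zero hτ (by omega) h2n (by simpa using ht')
    · exact uu_top (τ := τ) (by omega) h2n t
  unfold psik dpsik d2psik
  rw [hj.1, hj.2.1, hj.2.2, hj2.1, hj2.2.1, hj2.2.2]
  norm_num

/-- reduction of the three sums on the interval `[τ j, τ (j+1)]` -/
lemma red_interval (hτ : TauMono τ n) {j : ℕ} (hjn : j + 1 < n) {t : ℝ} (ht : τ j ≤ t) (ht' : t ≤ τ (j+1)) :
    ExtF τ n f t = Gb τ n f j t + uu τ n (j+1) t * (Gb τ n f (j+1) t - Gb τ n f j t) ∧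
    DF τ n f t = du τ n (j+1) t * (Gb τ n f (j+1) t - Gb τ n f j t)
      + (deriv (Gb τ n f j) t + uu τ n (j+1) t * (deriv (Gb τ n f (j+1)) t - deriv (Gb τ n f j) t)) ∧
    D2F τ n f t = d2u τ n (j+1) t * (Gb τ n f (j+1) t - Gb τ n f j t)
      + 2 * du τ n (j+1) t * (deriv (Gb τ n f (j+1)) t - deriv (Gb τ n f j) t)
      + (deriv (deriv (Gb τ n f j)) t
        + uu τ n (j+1) t * (deriv (deriv (Gb τ n f (j+1))) t - deriv (deriv (Gb τ n f j)) t)) := by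
  have hz : ∀ k, k < n → k ≠ j → k ≠ j + 1 →
      psik τ n k t = 0 ∧ dpsik τ n k t = 0 ∧ d2psik τ n k t = 0 := by
    intro k hk hkj hkj1
    rcases lt_or_gt_of_ne hkj with h | h
    · exact psik_zero_low hτ h (by omega) ht
    · exact psik_zero_high hτ (by omega : j + 1 < k) ht'
  obtain ⟨e1, e2, e3, e4, e5, e6⟩ := psik_active hτ hjn ht ht'
  refine ⟨?_, ?_, ?_⟩
  · unfold ExtF
    rw [sum_collapse_pair hjn (fun k hk h1 h2 => by rw [(hz k hk h1 h2).1]; ring)]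
    rw [e1, e4]; ring
  · unfold DF
    rw [sum_collapse_pair hjn (fun k hk h1 h2 => by
      rw [(hz k hk h1 h2).1, (hz k hk h1 h2).2.1]; ring)]
    rw [e1, e2, e4, e5]; ring
  · unfold D2F
    rw [sum_collapse_pair hjn (fun k hk h1 h2 => by
      rw [(hz k hk h1 h2).1, (hz k hk h1 h2).2.1, (hz k hk h1 h2).2.2]; ring)]
    rw [e1, e2, e3, e4, e5, e6]; ring

/-- reduction left of `τ 0` -/
lemma red_left (hτ : TauMono τ n) (hn : 0 < n) {t : ℝ} (ht : t ≤ τ 0) :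
    ExtF τ n f t = Gb τ n f 0 t ∧ DF τ n f t = deriv (Gb τ n f 0) t ∧
    D2F τ n f t = deriv (deriv (Gb τ n f 0)) t := by
  have hz : ∀ k, k < n → k ≠ 0 →
      psik τ n k t = 0 ∧ dpsik τ n k t = 0 ∧ d2psik τ n k t = 0 := by
    intro k hk hk0
    exact psik_zero_high hτ (by omega : 0 < k) ht
  have h0 := uu_zero_k (τ := τ) (n := n) t
  have h1 : uu τ n 1 t = 0 ∧ du τ n 1 t = 0 ∧ d2u τ n 1 t = 0 := by
    by_cases h1n : 1 < n
    · exact uu_eq_zero hτ le_rfl h1n (by simpa using ht)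
    · exact uu_top (τ := τ) le_rfl h1n t
  have hp : psik τ n 0 t = 1 ∧ dpsik τ n 0 t = 0 ∧ d2psik τ n 0 t = 0 := by
    unfold psik dpsik d2psik
    rw [h0.1, h0.2.1, h0.2.2, h1.1, h1.2.1, h1.2.2]
    norm_num
  refine ⟨?_, ?_, ?_⟩
  · unfold ExtF
    rw [sum_collapse_single hn (fun k hk h1' => by rw [(hz k hk h1').1]; ring), hp.1]; ring
  · unfold DF
    rw [sum_collapse_single hn (fun k hk h1' => by
      rw [(hz k hk h1').1, (hz k hk h1').2.1]; ring), hp.1, hp.2.1]; ring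
  · unfold D2F
    rw [sum_collapse_single hn (fun k hk h1' => by
      rw [(hz k hk h1').1, (hz k hk h1').2.1, (hz k hk h1').2.2]; ring),
      hp.1, hp.2.1, hp.2.2]; ring

/-- reduction right of `τ (n-1)` -/
lemma red_right (hτ : TauMono τ n) (hn : 0 < n) {t : ℝ} (ht : τ (n-1) ≤ t) :
    ExtF τ n f t = Gb τ n f (n-1) t ∧ DF τ n f t = deriv (Gb τ n f (n-1)) t ∧
    D2F τ n f t = deriv (deriv (Gb τ n f (n-1))) t := by
  have hz : ∀ k, k < n → k ≠ n - 1 →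
      psik τ n k t = 0 ∧ dpsik τ n k t = 0 ∧ d2psik τ n k t = 0 := by
    intro k hk hk0
    exact psik_zero_low hτ (by omega : k < n - 1) (by omega) ht
  have hm : uu τ n (n-1) t = 1 ∧ du τ n (n-1) t = 0 ∧ d2u τ n (n-1) t = 0 := by
    rcases Nat.eq_zero_or_pos (n-1) with h | h
    · rw [h]; exact uu_zero_k t
    · exact uu_eq_one hτ h (by omega) ht
  have hn' : uu τ n n t = 0 ∧ du τ n n t = 0 ∧ d2u τ n n t = 0 :=
    uu_top (τ := τ) (by omega) (by omega) t
  have hnn : n - 1 + 1 = n := by omega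
  have hp : psik τ n (n-1) t = 1 ∧ dpsik τ n (n-1) t = 0 ∧ d2psik τ n (n-1) t = 0 := by
    unfold psik dpsik d2psik
    rw [hnn, hm.1, hm.2.1, hm.2.2, hn'.1, hn'.2.1, hn'.2.2]
    norm_num
  refine ⟨?_, ?_, ?_⟩
  · unfold ExtF
    rw [sum_collapse_single (by omega : n - 1 < n) (fun k hk h1' => by
      rw [(hz k hk h1').1]; ring), hp.1]; ring
  · unfold DF
    rw [sum_collapse_single (by omega : n - 1 < n) (fun k hk h1' => by
      rw [(hz k hk h1').1, (hz k hk h1').2.1]; ring), hp.1, hp.2.1]; ring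
  · unfold D2F
    rw [sum_collapse_single (by omega : n - 1 < n) (fun k hk h1' => by
      rw [(hz k hk h1').1, (hz k hk h1').2.1, (hz k hk h1').2.2]; ring),
      hp.1, hp.2.1, hp.2.2]; ring

end P5


lemma C2bounds {G : ℝ → ℝ} {K : ℝ} (h : C2NormLE1 G K) :
    (∀ x, |G x| ≤ K) ∧ (∀ x, |deriv G x| ≤ K) ∧ (∀ x, |deriv (deriv G) x| ≤ K) := by
  refine ⟨fun x => ?_, fun x => ?_, fun x => ?_⟩
  · have := abs_iteratedDeriv_le h (m := 0) (by norm_num) x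
    rwa [iteratedDeriv_zero] at this
  · have := abs_iteratedDeriv_le h (m := 1) (by norm_num) x
    rwa [iteratedDeriv_one] at this
  · have := abs_iteratedDeriv_le h (m := 2) (by norm_num) x
    rwa [show (2:ℕ) = 1 + 1 from rfl, iteratedDeriv_succ, iteratedDeriv_one] at this

lemma C2sum1_le_of {F : ℝ → ℝ} {t M : ℝ} (hM : 0 ≤ M)
    (h0 : |iteratedDeriv 0 F t| ≤ M) (h1 : |iteratedDeriv 1 F t| ≤ M)
    (h2 : |iteratedDeriv 2 F t| ≤ M) : C2sum1 F t ≤ 2 * M := by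
  unfold C2sum1
  rw [Finset.sum_range_succ, Finset.sum_range_succ, Finset.sum_range_one]
  have hsum : (iteratedDeriv 0 F t)^2 + (iteratedDeriv 1 F t)^2 + (iteratedDeriv 2 F t)^2
      ≤ (2*M)^2 := by
    nlinarith [sq_abs (iteratedDeriv 0 F t), sq_abs (iteratedDeriv 1 F t),
      sq_abs (iteratedDeriv 2 F t), abs_nonneg (iteratedDeriv 0 F t),
      abs_nonneg (iteratedDeriv 1 F t), abs_nonneg (iteratedDeriv 2 F t)]
  calc Real.sqrt ((iteratedDeriv 0 F t)^2 + (iteratedDeriv 1 F t)^2 + (iteratedDeriv 2 F t)^2)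
      ≤ Real.sqrt ((2*M)^2) := Real.sqrt_le_sqrt hsum
    _ = 2*M := Real.sqrt_sq (by linarith)

lemma locate {τ : ℕ → ℝ} {n : ℕ} (hτ : TauMono τ n) (hn : 2 ≤ n) {x : ℝ}
    (h0 : τ 0 ≤ x) (h1 : x ≤ τ (n-1)) :
    ∃ j, j + 1 < n ∧ τ j ≤ x ∧ x ≤ τ (j+1) := by
  classical
  set P : ℕ → Prop := fun k => τ k ≤ x with hPdef
  set j := Nat.findGreatest P (n-2) with hjdef
  have hj : P j := Nat.findGreatest_spec (Nat.zero_le _) h0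
  have hjle : j ≤ n - 2 := Nat.findGreatest_le _
  refine ⟨j, by omega, hj, ?_⟩
  rcases eq_or_lt_of_le hjle with heq | hlt
  · have h2 : j + 1 = n - 1 := by omega
    rw [h2]; exact h1
  · have hng := Nat.findGreatest_is_greatest (by omega : Nat.findGreatest P (n-2) < j + 1)
      (by omega : j + 1 ≤ n - 2)
    have : ¬ τ (j+1) ≤ x := hng
    linarith [lt_of_not_ge this]
set_option maxHeartbeats 2000000 in
/-- One-dimensional nonnegative `C²` extension operator of bounded depth. -/
theorem oneDim_nonneg_extension_bounded_depth :
    ∃ (C : ℝ) (D : ℕ),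
      ∀ E : Set ℝ, E.Finite →
        ∃ Ext : (ℝ → ℝ) → (ℝ → ℝ),
          (∀ f : ℝ → ℝ, MemC2plus1 E f →
            ContDiff ℝ 2 (Ext f) ∧ (∀ t, 0 ≤ Ext f t) ∧ (∀ t ∈ E, Ext f t = f t) ∧
            C2NormLE1 (Ext f) (C * traceNorm1plus E f)) ∧
          (∀ t : ℝ, ∃ S : Set ℝ, S ⊆ E ∧ S.ncard ≤ D ∧
            ∀ f g : ℝ → ℝ, MemC2plus1 E f → MemC2plus1 E g → (∀ s ∈ S, f s = g s) →
              ∀ m ≤ 2, iteratedDeriv m (Ext f) t = iteratedDeriv m (Ext g) t) := by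
  classical
  obtain ⟨B, hB0, hB1, hB2⟩ := sigma_bound
  refine ⟨24*(B+1), 6, ?_⟩
  intro E hE
  set s : Finset ℝ := hE.toFinset with hsdef
  set n : ℕ := s.card with hndef
  set emb := s.orderEmbOfFin hndef.symm with hembdef
  set τ : ℕ → ℝ := fun k => if h : k < n then emb ⟨k, h⟩ else 0 with hτdef
  have hτmono : TauMono τ n := by
    intro i j hij hjn
    have hin : i < n := lt_trans hij hjn
    simp only [hτdef, dif_pos hin, dif_pos hjn]
    exact emb.strictMono (show (⟨i, hin⟩ : Fin n) < ⟨j, hjn⟩ from hij)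
  have hτmem : ∀ k, k < n → τ k ∈ E := by
    intro k hk
    simp only [hτdef, dif_pos hk]
    have h1 := s.orderEmbOfFin_mem hndef.symm ⟨k, hk⟩
    exact hE.mem_toFinset.1 h1
  have hτsurj : ∀ x, x ∈ E → ∃ k, k < n ∧ τ k = x := by
    intro x hx
    have hx' : x ∈ s := by rw [hsdef, Set.Finite.mem_toFinset]; exact hx
    have hx2 : x ∈ Set.range emb := by
      rw [hembdef, Finset.range_orderEmbOfFin]
      exact_mod_cast hx'
    obtain ⟨i, hi⟩ := hx2
    refine ⟨i.1, i.2, ?_⟩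
    simp only [hτdef, dif_pos i.2]
    rw [← hi]
  have hNsub : ∀ k, k < n → NNk τ n k ⊆ E := by
    intro k hk y hy
    rcases hy with h | h | h
    · rw [h]; exact hτmem _ (by omega)
    · rw [h]; exact hτmem _ hk
    · rw [h]; exact hτmem _ (by omega)
  have hmemNN : ∀ k, k < n → τ k ∈ NNk τ n k := by
    intro k hk; right; left; rfl
  have hmemNN2 : ∀ k, k + 1 < n → τ (k+1) ∈ NNk τ n k := by
    intro k hk
    have hmin : min (k+1) (n-1) = k + 1 := by omega
    show τ (k+1) ∈ ({τ (k-1), τ k, τ (min (k+1) (n-1))} : Set ℝ)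
    simp [hmin]
  have hmemNN3 : ∀ k, k + 1 < n → τ k ∈ NNk τ n (k+1) := by
    intro k hk
    show τ k ∈ ({τ (k+1-1), τ (k+1), τ (min (k+2) (n-1))} : Set ℝ)
    simp [show k+1-1 = k from rfl]
  have hGbeq : ∀ (f g : ℝ → ℝ) (k : ℕ) (S : Set ℝ), NNk τ n k ⊆ S →
      (∀ y ∈ S, f y = g y) → Gb τ n f k = Gb τ n g k := by
    intro f g k S hsub hfg
    have hind : (NNk τ n k).indicator f = (NNk τ n k).indicator g := by
      funext y
      by_cases hy : y ∈ NNk τ n k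
      · rw [Set.indicator_of_mem hy, Set.indicator_of_mem hy, hfg y (hsub hy)]
      · rw [Set.indicator_of_notMem hy, Set.indicator_of_notMem hy]
    unfold Gb
    rw [hind]
  have hncardNN : ∀ k, (NNk τ n k).ncard ≤ 6 := by
    intro k
    have h1 : (NNk τ n k).ncard ≤ 3 := by
      unfold NNk
      refine le_trans (Set.ncard_insert_le _ _) ?_
      have := Set.ncard_insert_le (τ k) ({τ (min (k+1) (n-1))} : Set ℝ)
      simp only [Set.ncard_singleton] at this
      omega
    omega
  refine ⟨ExtF τ n, ?_, ?_⟩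
  · -- ============ main quantitative clause ============
    intro f hf
    have hGb : ∀ k, k < n → ContDiff ℝ 2 (Gb τ n f k) ∧ (∀ t, 0 ≤ Gb τ n f k t) ∧
        (∀ x ∈ NNk τ n k, Gb τ n f k x = f x) ∧
        C2NormLE1 (Gb τ n f k) (2 * traceNorm1plus E f) := by
      intro k hk
      have hsub := hNsub k hk
      have hagree : ∀ a ∈ NNk τ n k, (NNk τ n k).indicator f a = f a :=
        fun a ha => Set.indicator_of_mem ha f
      have hmem : MemC2plus1 (NNk τ n k) ((NNk τ n k).indicator f) := by
        obtain ⟨F, h1, h2, h3, M, h4⟩ := hf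
        exact ⟨F, h1, h2, fun x hx => by rw [h3 x (hsub hx), hagree x hx], ⟨M, h4⟩⟩
      obtain ⟨p1, p2, p3, p4⟩ := pickP_spec hmem
      refine ⟨p1, p2, fun x hx => by rw [show Gb τ n f k x = (NNk τ n k).indicator f x from
        p3 x hx, hagree x hx], ?_⟩
      apply p4.mono
      have := tn_mono hsub hagree hf
      linarith
    have hGcd : ∀ k, k < n → ContDiff ℝ 2 (Gb τ n f k) := fun k hk => (hGb k hk).1
    set Kh := 2 * traceNorm1plus E f with hKhdef
    have htn0 := tn_nonneg E f
    have hKh0 : 0 ≤ Kh := by rw [hKhdef]; linarith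
    have hGB : ∀ k, k < n → (∀ x, |Gb τ n f k x| ≤ Kh) ∧ (∀ x, |deriv (Gb τ n f k) x| ≤ Kh) ∧
        (∀ x, |deriv (deriv (Gb τ n f k)) x| ≤ Kh) :=
      fun k hk => C2bounds (hGb k hk).2.2.2
    refine ⟨contDiff_ExtF hτmono hGcd, ?_, ?_, ?_⟩
    · -- nonnegativity
      intro t
      apply Finset.sum_nonneg
      intro k hk
      apply mul_nonneg
      · apply mul_nonneg (uu_mem (τ := τ) (n := n) k t).1
        have := (uu_mem (τ := τ) (n := n) (k+1) t).2
        linarith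
      · exact (hGb k (Finset.mem_range.1 hk)).2.1 t
    · -- interpolation
      intro x hx
      obtain ⟨k, hk, rfl⟩ := hτsurj x hx
      by_cases hk1 : k + 1 < n
      · have hle : τ k ≤ τ (k+1) := hτmono.le (by omega) hk1
        have hred := (red_interval (f := f) hτmono hk1 (le_refl (τ k)) hle).1
        have hu : uu τ n (k+1) (τ k) = 0 := by
          have : τ k ≤ τ (k + 1 - 1) := by
            rw [show k + 1 - 1 = k from rfl]
          exact (uu_eq_zero hτmono (by omega) hk1 this).1
        rw [hred, hu]
        rw [(hGb k hk).2.2.1 (τ k) (hmemNN k hk)]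
        ring
      · have hkeq : k = n - 1 := by omega
        have hred := (red_right (f := f) hτmono (by omega) (by rw [← hkeq] : τ (n-1) ≤ τ k)).1
        rw [hred, ← hkeq]
        exact (hGb k hk).2.2.1 (τ k) (hmemNN k hk)
    · -- the norm bound
      intro t
      obtain ⟨i0, i1, i2⟩ := iteratedDeriv_ExtF hτmono hGcd t
      have hm0 : (0:ℝ) ≤ (3 + 6*B) * Kh := mul_nonneg (by linarith) hKh0
      have habs : |ExtF τ n f t| ≤ (3 + 6*B) * Kh ∧ |DF τ n f t| ≤ (3 + 6*B) * Kh ∧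
          |D2F τ n f t| ≤ (3 + 6*B) * Kh := by
        rcases Nat.eq_zero_or_pos n with hn0 | hn1
        · have hz : ExtF τ n f t = 0 ∧ DF τ n f t = 0 ∧ D2F τ n f t = 0 := by
            unfold ExtF DF D2F
            rw [hn0]
            simp
          rw [hz.1, hz.2.1, hz.2.2]
          simp only [abs_zero]
          exact ⟨hm0, hm0, hm0⟩
        · have hwk : ∀ y : ℝ, |y| ≤ Kh → |y| ≤ (3 + 6*B) * Kh := by
            intro y hy
            nlinarith
          by_cases hL : t ≤ τ 0
          · obtain ⟨e0, e1, e2⟩ := red_left (f := f) hτmono hn1 hL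
            rw [e0, e1, e2]
            have hb := hGB 0 hn1
            exact ⟨hwk _ (hb.1 t), hwk _ (hb.2.1 t), hwk _ (hb.2.2 t)⟩
          · by_cases hR : τ (n-1) ≤ t
            · obtain ⟨e0, e1, e2⟩ := red_right (f := f) hτmono hn1 hR
              rw [e0, e1, e2]
              have hb := hGB (n-1) (by omega)
              exact ⟨hwk _ (hb.1 t), hwk _ (hb.2.1 t), hwk _ (hb.2.2 t)⟩
            · have hn2 : 2 ≤ n := by
                by_contra hcon
                have hone : n = 1 := by omega
                exact hR (by rw [show n - 1 = 0 by omega]; linarith [lt_of_not_ge hL])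
              obtain ⟨j, hjn, hjt, hjt'⟩ := locate hτmono hn2
                (le_of_lt (lt_of_not_ge hL)) (le_of_lt (lt_of_not_ge hR))
              obtain ⟨e0, e1, e2⟩ := red_interval (f := f) hτmono hjn hjt hjt'
              rw [e0, e1, e2]
              have hjltn : j < n := by omega
              have hab : τ j < τ (j+1) := hτmono j (j+1) (by omega) hjn
              have hja : Gb τ n f j (τ j) = Gb τ n f (j+1) (τ j) := by
                rw [(hGb j hjltn).2.2.1 (τ j) (hmemNN j hjltn),
                  (hGb (j+1) hjn).2.2.1 (τ j) (hmemNN3 j hjn)]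
              have hjb : Gb τ n f j (τ (j+1)) = Gb τ n f (j+1) (τ (j+1)) := by
                rw [(hGb j hjltn).2.2.1 (τ (j+1)) (hmemNN2 j hjn),
                  (hGb (j+1) hjn).2.2.1 (τ (j+1)) (hmemNN (j+1) hjn)]
              obtain ⟨hH0, hH1⟩ := Hbounds (hGb j hjltn).1 (hGb (j+1) hjn).1 hKh0
                (hGB j hjltn).1 (hGB j hjltn).2.1 (hGB j hjltn).2.2
                (hGB (j+1) hjn).1 (hGB (j+1) hjn).2.1 (hGB (j+1) hjn).2.2
                hab hja hjb hjt hjt'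
              have hgap : (0:ℝ) < τ (j+1) - τ j := by linarith
              have hj1 : j + 1 - 1 = j := rfl
              have hdub : |du τ n (j+1) t| ≤ B / (τ (j+1) - τ j) := by
                rw [du_of (by omega : j + 1 ≠ 0) hjn]
                simp only [hj1]
                rw [abs_div, abs_of_pos hgap]
                exact (div_le_div_iff_of_pos_right hgap).2 (hB1 _)
              have hd2ub : |d2u τ n (j+1) t| ≤ B / (τ (j+1) - τ j)^2 := by
                rw [d2u_of (by omega : j + 1 ≠ 0) hjn]
                simp only [hj1]
                rw [abs_div, abs_of_pos (pow_pos hgap 2)]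
                exact (div_le_div_iff_of_pos_right (pow_pos hgap 2)).2 (hB2 _)
              obtain ⟨b0, b1, b2⟩ := blend_bound hB0 hKh0 hgap
                (uu_mem (τ := τ) (n := n) (j+1) t).1 (uu_mem (τ := τ) (n := n) (j+1) t).2
                hdub hd2ub
                ((hGB j hjltn).1 t) ((hGB (j+1) hjn).1 t)
                ((hGB j hjltn).2.1 t) ((hGB (j+1) hjn).2.1 t)
                ((hGB j hjltn).2.2 t) ((hGB (j+1) hjn).2.2 t)
                hH0 hH1
              refine ⟨le_trans b0 (by nlinarith), le_trans b1 (by nlinarith), b2⟩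
      have hC2 : C2sum1 (ExtF τ n f) t ≤ 2 * ((3 + 6*B) * Kh) := by
        apply C2sum1_le_of hm0
        · rw [i0]; exact habs.1
        · rw [i1]; exact habs.2.1
        · rw [i2]; exact habs.2.2
      calc C2sum1 (ExtF τ n f) t ≤ 2 * ((3 + 6*B) * Kh) := hC2
        _ ≤ 24*(B+1) * traceNorm1plus E f := by rw [hKhdef]; nlinarith
  · -- ============ bounded depth clause ============
    intro t
    rcases Nat.eq_zero_or_pos n with hn0 | hn1
    · refine ⟨∅, Set.empty_subset E, by simp, ?_⟩
      intro f g _ _ _ m _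
      have hfg : ExtF τ n f = ExtF τ n g := by
        funext x
        unfold ExtF
        rw [hn0]
        simp
      rw [hfg]
    · by_cases hL : t < τ 0
      · refine ⟨NNk τ n 0, hNsub 0 hn1, hncardNN 0, ?_⟩
        intro f g _ _ hfg m _
        have hGeq : Gb τ n f 0 = Gb τ n g 0 := hGbeq f g 0 _ (fun y hy => hy) hfg
        have hev : ExtF τ n f =ᶠ[nhds t] ExtF τ n g := by
          apply Filter.eventuallyEq_of_mem (isOpen_Iio.mem_nhds hL)
          intro x hx
          have hx' : x ≤ τ 0 := le_of_lt hx
          rw [(red_left (f := f) hτmono hn1 hx').1, (red_left (f := g) hτmono hn1 hx').1, hGeq]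
        exact hev.iteratedDeriv_eq m
      · by_cases hR : τ (n-1) < t
        · refine ⟨NNk τ n (n-1), hNsub (n-1) (by omega), hncardNN (n-1), ?_⟩
          intro f g _ _ hfg m _
          have hGeq : Gb τ n f (n-1) = Gb τ n g (n-1) := hGbeq f g (n-1) _ (fun y hy => hy) hfg
          have hev : ExtF τ n f =ᶠ[nhds t] ExtF τ n g := by
            apply Filter.eventuallyEq_of_mem (isOpen_Ioi.mem_nhds hR)
            intro x hx
            have hx' : τ (n-1) ≤ x := le_of_lt hx
            rw [(red_right (f := f) hτmono hn1 hx').1, (red_right (f := g) hτmono hn1 hx').1, hGeq]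
          exact hev.iteratedDeriv_eq m
        · push_neg at hL hR
          rcases eq_or_lt_of_le (le_trans hL hR) with hflat | hn2'
          · -- τ 0 = τ (n-1) : forces n = 1 setting
            have hn1' : n = 1 := by
              by_contra hcon
              have h2 : 2 ≤ n := by omega
              have := hτmono 0 (n-1) (by omega) (by omega)
              linarith
            refine ⟨NNk τ n 0, hNsub 0 hn1, hncardNN 0, ?_⟩
            intro f g _ _ hfg m _
            have hGeq : Gb τ n f 0 = Gb τ n g 0 := hGbeq f g 0 _ (fun y hy => hy) hfg
            have hev : ExtF τ n f = ExtF τ n g := by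
              funext x
              rcases le_total x (τ 0) with hx | hx
              · rw [(red_left (f := f) hτmono hn1 hx).1, (red_left (f := g) hτmono hn1 hx).1, hGeq]
              · have hx' : τ (n-1) ≤ x := by rw [show n - 1 = 0 by omega]; exact hx
                have h00 : n - 1 = 0 := by omega
                rw [(red_right (f := f) hτmono hn1 hx').1,
                  (red_right (f := g) hτmono hn1 hx').1, h00, hGeq]
            rw [hev]
          · -- genuine interior : τ 0 < t or τ 0 ≤ t ≤ τ (n-1) with n ≥ 2
            have hn2 : 2 ≤ n := by
              by_contra hcon
              have : n = 1 := by omega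
              rw [show n - 1 = 0 by omega] at hn2'
              linarith
            obtain ⟨j, hjn, hjt, hjt'⟩ := locate hτmono hn2 hL hR
            set A : ℝ := if j = 0 then τ 0 - 1 else τ (j-1) with hAdef
            set Bb : ℝ := if j + 2 < n then τ (j+2) else τ (n-1) + 1 with hBbdef
            have htA : A < t := by
              rw [hAdef]
              split_ifs with hj0
              · subst hj0; linarith
              · have := hτmono (j-1) j (by omega) (by omega)
                linarith
            have htB : t < Bb := by
              rw [hBbdef]
              split_ifs with hj2
              · have := hτmono (j+1) (j+2) (by omega) hj2
                linarith
              · have : τ (j+1) ≤ τ (n-1) := hτmono.le (by omega) (by omega)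
                linarith
            set S : Set ℝ := τ '' {m : ℕ | m < n ∧ j ≤ m + 2 ∧ m ≤ j + 3} with hSdef
            have hSsub : S ⊆ E := by
              rintro y ⟨m', hm', rfl⟩
              exact hτmem m' hm'.1
            have hScard : S.ncard ≤ 6 := by
              have hsub2 : {m : ℕ | m < n ∧ j ≤ m + 2 ∧ m ≤ j + 3} ⊆
                  ↑(Finset.Icc (j-2) (j+3)) := by
                intro m' hm'
                simp only [Set.mem_setOf_eq] at hm'
                simp only [Finset.coe_Icc, Set.mem_Icc]
                omega
              have hfin : ({m : ℕ | m < n ∧ j ≤ m + 2 ∧ m ≤ j + 3}).Finite :=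
                (Finset.Icc (j-2) (j+3)).finite_toSet.subset hsub2
              calc S.ncard ≤ ({m : ℕ | m < n ∧ j ≤ m + 2 ∧ m ≤ j + 3}).ncard :=
                    Set.ncard_image_le hfin
                _ ≤ (↑(Finset.Icc (j-2) (j+3)) : Set ℕ).ncard :=
                    Set.ncard_le_ncard hsub2 (Finset.Icc (j-2) (j+3)).finite_toSet
                _ ≤ 6 := by
                    rw [Set.ncard_coe_finset, Nat.card_Icc]
                    omega
            have hNS : ∀ k, k < n → j ≤ k + 1 → k ≤ j + 2 → NNk τ n k ⊆ S := by
              intro k hk hk1 hk2 y hy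
              rcases hy with h | h | h
              · exact ⟨k-1, ⟨by omega, by omega, by omega⟩, h.symm⟩
              · exact ⟨k, ⟨hk, by omega, by omega⟩, h.symm⟩
              · exact ⟨min (k+1) (n-1), ⟨by omega, by omega, by omega⟩, h.symm⟩
            refine ⟨S, hSsub, hScard, ?_⟩
            intro f g _ _ hfg m _
            have hev : ExtF τ n f =ᶠ[nhds t] ExtF τ n g := by
              apply Filter.eventuallyEq_of_mem (isOpen_Ioo.mem_nhds ⟨htA, htB⟩)
              intro x hx
              obtain ⟨hxA, hxB⟩ := hx
              by_cases hxL : x ≤ τ 0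
              · -- left of everything: j must be 0
                have hj0 : j = 0 := by
                  by_contra hj0
                  have h1 : A = τ (j-1) := by rw [hAdef, if_neg hj0]
                  have h2 : τ 0 ≤ τ (j-1) := hτmono.le (by omega) (by omega)
                  rw [h1] at hxA
                  linarith
                have hGeq : Gb τ n f 0 = Gb τ n g 0 :=
                  hGbeq f g 0 S (hNS 0 (by omega) (by omega) (by omega)) hfg
                rw [(red_left (f := f) hτmono hn1 hxL).1,
                  (red_left (f := g) hτmono hn1 hxL).1, hGeq]
              · by_cases hxR : τ (n-1) ≤ x
                · have hjn1 : n - 1 ≤ j + 1 := by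
                    by_contra hcon
                    have hj2n : j + 2 < n := by omega
                    have h1 : Bb = τ (j+2) := by rw [hBbdef, if_pos hj2n]
                    have h2 : τ (j+2) ≤ τ (n-1) := hτmono.le (by omega) (by omega)
                    rw [h1] at hxB
                    linarith
                  have hGeq : Gb τ n f (n-1) = Gb τ n g (n-1) :=
                    hGbeq f g (n-1) S (hNS (n-1) (by omega) (by omega) (by omega)) hfg
                  rw [(red_right (f := f) hτmono hn1 hxR).1,
                    (red_right (f := g) hτmono hn1 hxR).1, hGeq]
                · push_neg at hxL hxR
                  obtain ⟨j', hj'n, hj't, hj't'⟩ := locate hτmono hn2 hxL.le hxR.le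
                  -- index window control
                  have hj'ub : j' ≤ j + 1 := by
                    by_cases hj2n : j + 2 < n
                    · have h1 : Bb = τ (j+2) := by rw [hBbdef, if_pos hj2n]
                      by_contra hcon
                      have h2 : τ (j+2) ≤ τ j' := hτmono.le (by omega) (by omega)
                      rw [h1] at hxB
                      linarith
                    · omega
                  have hj'lb : j ≤ j' + 1 := by
                    by_cases hj0 : j = 0
                    · omega
                    · have h1 : A = τ (j-1) := by rw [hAdef, if_neg hj0]
                      by_contra hcon
                      have h2 : τ (j'+1) ≤ τ (j-1) := hτmono.le (by omega) (by omega)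
                      rw [h1] at hxA
                      linarith
                  have hGeq1 : Gb τ n f j' = Gb τ n g j' :=
                    hGbeq f g j' S (hNS j' (by omega) (by omega) (by omega)) hfg
                  have hGeq2 : Gb τ n f (j'+1) = Gb τ n g (j'+1) :=
                    hGbeq f g (j'+1) S (hNS (j'+1) (by omega) (by omega) (by omega)) hfg
                  rw [(red_interval (f := f) hτmono hj'n hj't hj't').1,
                    (red_interval (f := g) hτmono hj'n hj't hj't').1, hGeq1, hGeq2]
            exact hev.iteratedDeriv_eq m

end
end

section
/- For every positive integer D there is a constant C_D, depending only on D, such that the following holds. Let ℱ be a finite collection of compact, convex, symmetric subsets of ℝ^D, each having 0 as an interior point. Then there exist K₁, …, K_{D(D+1)} ∈ ℱ such that K₁ ∩ ⋯ ∩ K_{D(D+1)} ⊂ C_D · (∩_{K∈ℱ} K). -/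
open Set Pointwise

lemma aux_sum_mem {E : Type*} [AddCommGroup E] [Module ℝ E] {L : Set E}
    (hconv : Convex ℝ L) (h0 : (0 : E) ∈ L) {n : ℕ} {u : Fin n → E}
    (hu : ∀ i, u i ∈ L) (hneg : ∀ i, -u i ∈ L) (c : Fin n → ℝ)
    (hc : ∑ i, |c i| ≤ 1) : ∑ i, c i • u i ∈ L := by
  classical
  set p : Option (Fin n) → E := fun o => o.elim 0 (fun i => if 0 ≤ c i then u i else -u i)
  set w : Option (Fin n) → ℝ := fun o => o.elim (1 - ∑ i, |c i|) (fun i => |c i|)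
  have h₀ : ∀ o ∈ Finset.univ, 0 ≤ w o := by
    rintro (_ | i) _
    · simpa [w] using hc
    · simp [w, abs_nonneg]
  have h₁ : ∑ o, w o = 1 := by
    rw [Fintype.sum_option]
    simp [w]
  have hz : ∀ o ∈ Finset.univ, p o ∈ L := by
    rintro (_ | i) _
    · simpa [p] using h0
    · by_cases h : 0 ≤ c i <;> simp [p, h, hu i, hneg i]
  have key := hconv.sum_mem h₀ h₁ hz
  rw [Fintype.sum_option] at key
  have hpn : w none • p none = 0 := by simp [w, p]
  rw [hpn, zero_add] at key
  have : ∑ i : Fin n, w (some i) • p (some i) = ∑ i : Fin n, c i • u i := by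
    apply Finset.sum_congr rfl
    intro i _
    show |c i| • (if 0 ≤ c i then u i else -u i) = c i • u i
    by_cases h : 0 ≤ c i
    · rw [if_pos h, abs_of_nonneg h]
    · push_neg at h
      rw [if_neg (not_le.2 h), abs_of_neg h, smul_neg, neg_smul, neg_neg]
  rwa [this] at key

lemma aux_select {α : Type*} {𝓕 I : Finset α} (hI : I ⊆ 𝓕) {D : ℕ}
    (hcard : I.card ≤ D) (K₀ : α) (hK₀ : K₀ ∈ 𝓕) :
    ∃ g : Fin D → α, (∀ i, g i ∈ 𝓕) ∧ ∀ X ∈ I, ∃ i, g i = X := by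
  refine ⟨fun i => I.toList.getD i K₀, fun i => ?_, fun X hX => ?_⟩
  · show I.toList.getD i K₀ ∈ 𝓕
    by_cases h : (i : ℕ) < I.toList.length
    · rw [List.getD_eq_getElem _ _ h]
      exact hI (Finset.mem_toList.1 (List.getElem_mem h))
    · rw [List.getD_eq_default _ _ (not_lt.1 h)]
      exact hK₀
  · have hX' : X ∈ I.toList := Finset.mem_toList.2 hX
    obtain ⟨n, hn, hXn⟩ := List.mem_iff_getElem.1 hX'
    have hn' : n < D := lt_of_lt_of_le (by simpa [Finset.length_toList] using hn) hcard
    exact ⟨⟨n, hn'⟩, by show I.toList.getD n K₀ = X; rw [List.getD_eq_getElem _ _ (by simpa using hn)]; exact hXn⟩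

/-- A variant of Helly's theorem: given a finite (nonempty) family of
compact, convex, symmetric subsets of `ℝ^D` with `0` in the interior of each, some
`D(D+1)` of them have intersection contained in `C_D` times the intersection of all. -/
theorem helly_variant :
    ∀ D : ℕ, 0 < D →
      ∃ CD : ℝ, 0 < CD ∧
        ∀ 𝓕 : Finset (Set (EuclideanSpace ℝ (Fin D))), 𝓕.Nonempty →
          (∀ K ∈ 𝓕, IsCompact K ∧ Convex ℝ K ∧ K = -K ∧
            (0 : EuclideanSpace ℝ (Fin D)) ∈ interior K) →
          ∃ Ks : Fin (D * (D + 1)) → Set (EuclideanSpace ℝ (Fin D)),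
            (∀ i, Ks i ∈ 𝓕) ∧
            (⋂ i, Ks i) ⊆ CD • ⋂ K ∈ 𝓕, (K : Set (EuclideanSpace ℝ (Fin D))) := by
  intro D hD
  have hD' : (0 : ℝ) < (D : ℝ) := by exact_mod_cast hD
  refine ⟨(D : ℝ), hD', ?_⟩
  intro 𝓕 h𝓕ne h𝓕
  classical
  set L : Set (EuclideanSpace ℝ (Fin D)) := ⋂ K ∈ 𝓕, K with hLdef
  obtain ⟨K₀, hK₀⟩ := h𝓕ne
  have h0K : ∀ K ∈ 𝓕, (0 : EuclideanSpace ℝ (Fin D)) ∈ K :=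
    fun K hK => interior_subset (h𝓕 K hK).2.2.2
  have h0L : (0 : EuclideanSpace ℝ (Fin D)) ∈ L := Set.mem_iInter₂.2 h0K
  have hLsub : ∀ K ∈ 𝓕, L ⊆ K := fun K hK => Set.biInter_subset_of_mem hK
  have hLconv : Convex ℝ L :=
    convex_iInter fun K => convex_iInter fun hK => (h𝓕 K hK).2.1
  have hLsymm : ∀ x ∈ L, -x ∈ L := by
    intro x hx
    refine Set.mem_iInter₂.2 fun K hK => ?_
    have hsym := (h𝓕 K hK).2.2.1
    exact Set.mem_neg.1 (hsym ▸ Set.mem_iInter₂.1 hx K hK)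
  have hLclosed : IsClosed L :=
    isClosed_biInter fun K hK => (h𝓕 K hK).1.isClosed
  have hLcompact : IsCompact L :=
    (h𝓕 K₀ hK₀).1.of_isClosed_subset hLclosed (hLsub K₀ hK₀)
  -- 0 is in the interior of L
  have hOint : (0 : EuclideanSpace ℝ (Fin D)) ∈ interior L := by
    have hopen : IsOpen (⋂ K ∈ 𝓕, interior K) :=
      isOpen_biInter_finset fun K _ => isOpen_interior
    have hsub : (⋂ K ∈ 𝓕, interior K) ⊆ L :=
      Set.iInter₂_mono fun K hK => interior_subset
    have h0 : (0 : EuclideanSpace ℝ (Fin D)) ∈ ⋂ K ∈ 𝓕, interior K :=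
      Set.mem_iInter₂.2 fun K hK => (h𝓕 K hK).2.2.2
    exact interior_maximal hsub hopen h0
  obtain ⟨ε, hε, hball⟩ := Metric.mem_nhds_iff.1 (mem_interior_iff_mem_nhds.1 hOint)
  -- standard basis and the determinant functional
  set e := (EuclideanSpace.basisFun (Fin D) ℝ).toBasis with hedef
  set f : (Fin D → EuclideanSpace ℝ (Fin D)) → ℝ := fun v => |e.det v| with hfdef
  have hentry : ∀ i k, Continuous fun v : Fin D → EuclideanSpace ℝ (Fin D) => e.toMatrix v i k := by
    intro i k
    simp only [Module.Basis.toMatrix_apply, ← Module.Basis.coord_apply]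
    exact (e.coord i).continuous_of_finiteDimensional.comp (continuous_apply k)
  have hfc : Continuous f := by
    have h1 : Continuous fun v : Fin D → EuclideanSpace ℝ (Fin D) => e.det v := by
      simp only [Module.Basis.det_apply]
      exact Continuous.matrix_det (continuous_matrix hentry)
    exact h1.abs
  set S : Set (Fin D → EuclideanSpace ℝ (Fin D)) := Set.pi Set.univ (fun _ => L) with hSdef
  have hScomp : IsCompact S := isCompact_univ_pi fun _ => hLcompact
  have hSne : S.Nonempty := ⟨fun _ => 0, fun i _ => h0L⟩
  obtain ⟨u, huS, humax⟩ := hScomp.exists_isMaxOn hSne hfc.continuousOn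
  have huL : ∀ i, u i ∈ L := fun i => huS i (Set.mem_univ i)
  have hmax : ∀ v ∈ S, f v ≤ f u := humax
  -- positivity of the maximum
  have hfu : 0 < f u := by
    set vε : Fin D → EuclideanSpace ℝ (Fin D) := fun i => (ε / 2) • e i with hvdef
    have hvS : vε ∈ S := by
      intro i _
      apply hball
      rw [mem_ball_zero_iff]
      have hnorm : ‖e i‖ = 1 := by
        rw [hedef, OrthonormalBasis.coe_toBasis]
        exact (EuclideanSpace.basisFun (Fin D) ℝ).orthonormal.1 i
      rw [norm_smul, hnorm, mul_one, Real.norm_eq_abs, abs_of_pos (by linarith)]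
      linarith
    have hdet : e.det vε = (ε / 2) ^ D := by
      have h1 : e.det vε = (∏ _i : Fin D, (ε / 2)) • e.det e := by
        rw [hvdef]
        exact e.det.map_smul_univ (fun _ => ε / 2) e
      rw [h1, Module.Basis.det_self]
      simp [div_pow]
    have : 0 < f vε := by
      rw [hfdef]
      simp only [hdet, abs_pow]
      positivity
    exact lt_of_lt_of_le this (hmax vε hvS)
  have hdetu : e.det u ≠ 0 := by
    intro h
    rw [hfdef] at hfu
    simp only [h, abs_zero] at hfu
    exact lt_irrefl 0 hfu
  obtain ⟨hli, hspan⟩ := (Module.Basis.is_basis_iff_det e).2 (isUnit_iff_ne_zero.2 hdetu)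
  set b : Module.Basis (Fin D) ℝ (EuclideanSpace ℝ (Fin D)) := Module.Basis.mk hli hspan.ge with hbdef
  have hb : ∀ i, b i = u i := fun i => by rw [hbdef, Module.Basis.coe_mk]
  have hrepr : ∀ x : EuclideanSpace ℝ (Fin D), x = ∑ i, b.repr x i • u i := by
    intro x
    conv_lhs => rw [← b.sum_repr x]
    exact Finset.sum_congr rfl fun i _ => by rw [hb i]
  -- coordinate bound on L
  have hcoord : ∀ x ∈ L, ∀ j, |b.repr x j| ≤ 1 := by
    intro x hx j
    have hdetup : e.det (Function.update u j x) = b.repr x j * e.det u := by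
      conv_lhs => rw [hrepr x]
      rw [show Function.update u j (∑ i, b.repr x i • u i) = Function.update u j (∑ i, b.repr x i • u i) from rfl]
      rw [AlternatingMap.map_update_sum]
      rw [Finset.sum_eq_single j]
      · rw [AlternatingMap.map_update_smul, Function.update_eq_self]
        simp [smul_eq_mul]
      · intro i _ hij
        rw [AlternatingMap.map_update_smul, e.det.map_update_self _ (Ne.symm hij), smul_zero]
      · intro h
        exact absurd (Finset.mem_univ j) h
    have hupS : Function.update u j x ∈ S := by
      intro i _
      rcases eq_or_ne i j with rfl | h
      · simpa using hx
      · rw [Function.update_of_ne h]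
        exact huL i
    have hle := hmax _ hupS
    rw [hfdef] at hle
    simp only [hdetup, abs_mul] at hle
    exact (mul_le_iff_le_one_left hfu).1 hle
  -- per-direction selection via Helly's theorem
  have hrank : Module.finrank ℝ (EuclideanSpace ℝ (Fin D)) = D := finrank_euclideanSpace_fin
  have hsel : ∀ j : Fin D, ∃ g : Fin D → Set (EuclideanSpace ℝ (Fin D)),
      (∀ i, g i ∈ 𝓕) ∧ ∀ x, (∀ i, x ∈ g i) → b.repr x j ≤ 1 := by
    intro j
    set H : Set (EuclideanSpace ℝ (Fin D)) := {x | 1 < b.repr x j} with hHdef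
    have hHconv : Convex ℝ H := by
      apply convex_halfSpace_gt (f := fun x => b.repr x j)
      exact ⟨fun x y => by simp, fun c x => by simp⟩
    have hclaim : ∃ I : Finset (Set (EuclideanSpace ℝ (Fin D))), I ⊆ 𝓕 ∧ I.card ≤ D ∧
        ∀ x, (∀ X ∈ I, x ∈ X) → b.repr x j ≤ 1 := by
      by_contra hcon
      push_neg at hcon
      have hinter : ∀ I ⊆ insert H 𝓕, I.card ≤ Module.finrank ℝ (EuclideanSpace ℝ (Fin D)) + 1 →
          (⋂ X ∈ I, id X).Nonempty := by
        intro I hIsub hIcard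
        rw [hrank] at hIcard
        by_cases hH : H ∈ I
        · set I' := I.erase H with hI'def
          have hI'sub : I' ⊆ 𝓕 := by
            intro X hX
            have hXI := Finset.mem_of_mem_erase hX
            have hXne := Finset.ne_of_mem_erase hX
            rcases Finset.mem_insert.1 (hIsub hXI) with h | h
            · exact absurd h hXne
            · exact h
          have hI'card : I'.card ≤ D := by
            rw [hI'def, Finset.card_erase_of_mem hH]
            omega
          obtain ⟨x, hxI', hxH⟩ := hcon I' hI'sub hI'card
          refine ⟨x, Set.mem_iInter₂.2 fun X hX => ?_⟩
          rcases eq_or_ne X H with rfl | hne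
          · exact hxH
          · exact hxI' X (Finset.mem_erase.2 ⟨hne, hX⟩)
        · have hIsub' : I ⊆ 𝓕 := fun X hX => by
            rcases Finset.mem_insert.1 (hIsub hX) with h | h
            · exact absurd (h ▸ hX) hH
            · exact h
          exact ⟨0, Set.mem_iInter₂.2 fun X hX => h0K X (hIsub' hX)⟩
      have hconvex : ∀ X ∈ insert H 𝓕, Convex ℝ (id X) := by
        intro X hX
        rcases Finset.mem_insert.1 hX with rfl | h
        · exact hHconv
        · exact (h𝓕 X h).2.1
      obtain ⟨y, hy⟩ := Convex.helly_theorem' (𝕜 := ℝ) hconvex hinter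
      have hyH : y ∈ H := Set.mem_iInter₂.1 hy H (Finset.mem_insert_self H 𝓕)
      have hyL : y ∈ L := Set.mem_iInter₂.2 fun K hK =>
        Set.mem_iInter₂.1 hy K (Finset.mem_insert_of_mem hK)
      have := hcoord y hyL j
      rw [abs_le] at this
      exact absurd hyH (by simp only [hHdef, Set.mem_setOf_eq]; linarith [this.2])
    obtain ⟨I, hIsub, hIcard, hIbound⟩ := hclaim
    obtain ⟨g, hg𝓕, hgcov⟩ := aux_select hIsub hIcard K₀ hK₀
    refine ⟨g, hg𝓕, fun x hx => hIbound x fun X hX => ?_⟩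
    obtain ⟨i, hi⟩ := hgcov X hX
    exact hi ▸ hx i
  choose g hg hgb using hsel
  -- assemble the D*(D+1) sets
  refine ⟨fun k =>
    if h : ((finProdFinEquiv.symm k).2 : ℕ) < D
    then g (finProdFinEquiv.symm k).1 ⟨(finProdFinEquiv.symm k).2, h⟩
    else K₀, fun k => ?_, ?_⟩
  · dsimp only
    by_cases h : ((finProdFinEquiv.symm k).2 : ℕ) < D
    · rw [dif_pos h]; exact hg _ _
    · rw [dif_neg h]; exact hK₀
  · intro x hx
    have hxmem := Set.mem_iInter.1 hx
    have hxg : ∀ j i, x ∈ g j i := by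
      intro j i
      have hk := hxmem (finProdFinEquiv (j, Fin.castSucc i))
      simp only [Equiv.symm_apply_apply] at hk
      have hlt : ((Fin.castSucc i : Fin (D + 1)) : ℕ) < D := by
        simp
      rw [dif_pos hlt] at hk
      exact hk
    have hxsg : ∀ j i, -x ∈ g j i := by
      intro j i
      have hsym := (h𝓕 _ (hg j i)).2.2.1
      exact Set.mem_neg.1 (hsym ▸ hxg j i)
    have habs : ∀ j, |b.repr x j| ≤ 1 := by
      intro j
      refine abs_le.2 ⟨?_, hgb j x (hxg j)⟩
      have h2 := hgb j (-x) (hxsg j)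
      have h3 : b.repr (-x) j = -(b.repr x j) := by simp
      linarith [h3 ▸ h2]
    rw [Set.mem_smul_set]
    refine ⟨∑ i, (b.repr x i / D) • u i, ?_, ?_⟩
    · apply aux_sum_mem hLconv h0L huL (fun i => hLsymm _ (huL i))
      calc ∑ i, |b.repr x i / (D : ℝ)|
          ≤ ∑ _i : Fin D, 1 / (D : ℝ) := by
            apply Finset.sum_le_sum
            intro i _
            rw [abs_div, abs_of_pos hD']
            gcongr
            exact habs i
        _ = 1 := by
            rw [Finset.sum_const, Finset.card_univ, Fintype.card_fin, nsmul_eq_mul]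
            field_simp
    · rw [Finset.smul_sum]
      have : ∀ i : Fin D, (D : ℝ) • ((b.repr x i / D) • u i) = b.repr x i • u i := by
        intro i
        rw [smul_smul]
        congr 1
        field_simp
      rw [Finset.sum_congr rfl fun i _ => this i]
      exact (hrepr x).symm
end
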